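/- Let W = W₁ × W₂ be a finite Coxeter group with S = S₁ ⊔ S₂. For transversal edges I ⇆ J in Q_{W₁} and K ⇆ L in Q_{W₂} the identity X_{I⊔K, J⊔K} · X_{J⊔K, J⊔L} = X_{I⊔K, I⊔L} · X_{I⊔L, J⊔L} holds in Ω(W,S); the left side equals ι₁(X_{IJ}) ι₂(X_{KL}) and the right side equals ι₂(X_{KL}) ι₁(X_{IJ}), so [ι₁(X_{IJ}), ι₂(X_{KL})] = 0. -/

import Mathlib

open scoped TensorProduct

noncomputable section

namespace WGraphPaper

variable (k : Type*) [CommRing k] {B B₁ B₂ : Type*}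

/-! ### Gyoja's W-graph algebra with coefficients in `k`
(`Omega ℤ M` is the W-graph algebra `Ω(W,S)` itself, `Omega k M` is `kΩ`). -/

/-- The free ring `k⟨e_b, x_b | b ∈ B⟩`; `Sum.inl b` encodes the generator `e_b` and
`Sum.inr b` encodes the generator `x_b`. -/
abbrev FreeGen (B : Type*) := FreeAlgebra k (B ⊕ B)

def eGen (b : B) : FreeGen k B := FreeAlgebra.ι k (Sum.inl b)
def xGen (b : B) : FreeGen k B := FreeAlgebra.ι k (Sum.inr b)

/-- `altProd a b n` is the alternating product `a * b * a * ⋯` with `n` factors. -/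
def altProd {A : Type*} [Monoid A] : A → A → ℕ → A
  | _, _, 0 => 1
  | a, b, n + 1 => a * altProd b a n

/-- The braid commutator `Δ_m(a,b) = (a b a ⋯) - (b a b ⋯)` (`m` factors each). -/
def braidComm {A : Type*} [Ring A] (m : ℕ) (a b : A) : A := altProd a b m - altProd b a m

/-- `ι(T_b) = -v⁻¹ e_b + v (1 - e_b) + x_b`, an element of `(FreeGen k B)[v,v⁻¹]`. -/
def iotaT (b : B) : LaurentPolynomial (FreeGen k B) :=
  LaurentPolynomial.C (-(eGen k b)) * LaurentPolynomial.T (-1)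
    + LaurentPolynomial.C (1 - eGen k b) * LaurentPolynomial.T 1
    + LaurentPolynomial.C (xGen k b)

/-- The coefficient of `v^n` in a Laurent polynomial. -/
def lcoeff {R : Type*} [Semiring R] (p : LaurentPolynomial R) (n : ℤ) : R :=
  (AddMonoidAlgebra.coeff p) n

/-- The defining relations of Gyoja's W-graph algebra: the relations (a) and (b) together
with the vanishing of all Laurent coefficients `y^γ(s,t)` of the braid commutators
`Δ_{m_{st}}(ι(T_s), ι(T_t))` (for `m_{st} < ∞`, i.e. `M s t ≠ 0`). -/
inductive OmegaRel (M : CoxeterMatrix B) : FreeGen k B → FreeGen k B → Prop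
  | e_idem (b : B) : OmegaRel M (eGen k b * eGen k b) (eGen k b)
  | e_comm (b b' : B) : OmegaRel M (eGen k b * eGen k b') (eGen k b' * eGen k b)
  | ex (b : B) : OmegaRel M (eGen k b * xGen k b) (xGen k b)
  | xe (b : B) : OmegaRel M (xGen k b * eGen k b) 0
  | braid (b b' : B) (h : M b b' ≠ 0) (γ : ℤ) :
      OmegaRel M (lcoeff (braidComm (M b b') (iotaT k b) (iotaT k b')) γ) 0

/-- Gyoja's W-graph algebra `Ω(W,S)` (for `k = ℤ`), resp. `kΩ(W,S)`, defined from
the Coxeter matrix of `(W,S)`. -/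
abbrev Omega (M : CoxeterMatrix B) := RingQuot (OmegaRel k M)

/-- The image of the generator `e_b` in `Ω`. -/
def eOm (M : CoxeterMatrix B) (b : B) : Omega k M :=
  RingQuot.mkRingHom (OmegaRel k M) (eGen k b)

/-- The image of the generator `x_b` in `Ω`. -/
def xOm (M : CoxeterMatrix B) (b : B) : Omega k M :=
  RingQuot.mkRingHom (OmegaRel k M) (xGen k b)

lemma commute_eOm (M : CoxeterMatrix B) (b b' : B) : Commute (eOm k M b) (eOm k M b') := by
  show _ = _
  rw [eOm, eOm, ← map_mul, ← map_mul]
  exact RingQuot.mkRingHom_rel (OmegaRel.e_comm b b')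

lemma commute_oneSubEOm (M : CoxeterMatrix B) (b b' : B) :
    Commute (1 - eOm k M b) (1 - eOm k M b') :=
  (Commute.one_left _).sub_left ((Commute.one_right _).sub_right (commute_eOm k M b b'))

variable [Fintype B] [DecidableEq B] [DecidableEq B₁] [DecidableEq B₂]

/-- The idempotent `E_I = (∏_{t ∈ I} e_t) (∏_{t ∈ S∖I} (1 - e_t))`. -/
def EOm (M : CoxeterMatrix B) (I : Finset B) : Omega k M :=
  (I.noncommProd (fun b => eOm k M b) (fun _ _ _ _ _ => commute_eOm k M _ _)) *
    ((Iᶜ).noncommProd (fun b => 1 - eOm k M b) (fun _ _ _ _ _ => commute_oneSubEOm k M _ _))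

/-- The edge element `X_{IJ}^s = E_I x_s E_J`. -/
def XOm (M : CoxeterMatrix B) (I J : Finset B) (s : B) : Omega k M :=
  EOm k M I * xOm k M s * EOm k M J

/-- `I ← J` is an edge of the compatibility graph `Q_W`: `I ∖ J ≠ ∅` and no element of
`I ∖ J` commutes (in `W`, i.e. `m_{st} = 2`) with an element of `J ∖ I`. -/
def QEdge (M : CoxeterMatrix B) (I J : Finset B) : Prop :=
  (I \ J).Nonempty ∧ ∀ s ∈ I \ J, ∀ t ∈ J \ I, M s t ≠ 2

/-- `I ⇆ J`: `I` and `J` are joined by a pair of transversal edges of `Q_W`. -/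
def Transversal (M : CoxeterMatrix B) (I J : Finset B) : Prop :=
  QEdge M I J ∧ (J \ I).Nonempty

/-- The generators of the subalgebra `Ψ(W,S)`: all `E_I` and all transversal edge
elements `X_{IJ}`. -/
def psiGens (M : CoxeterMatrix B) : Set (Omega k M) :=
  {a | ∃ I : Finset B, a = EOm k M I} ∪
    {a | ∃ I J : Finset B, ∃ s : B, Transversal M I J ∧ s ∈ I \ J ∧ a = XOm k M I J s}

/-- The subring `Ψ(W,S) ⊆ Ω(W,S)` generated by all `E_I` and all transversal edges. -/
def Psi (M : CoxeterMatrix B) : Subring (Omega k M) := Subring.closure (psiGens k M)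

/-- The subalgebra `kΨ(W,S) ⊆ kΩ(W,S)` generated by all `E_I` and all transversal edges. -/
def PsiAlg (M : CoxeterMatrix B) : Subalgebra k (Omega k M) :=
  Algebra.adjoin k (psiGens k M)

/-! ### Products of Coxeter systems -/

/-- The Coxeter matrix of the product `W₁ × W₂`, on `S = S₁ ⊔ S₂` (each element of `S₁`
commutes with each element of `S₂`). -/
def prodMatrix (M₁ : CoxeterMatrix B₁) (M₂ : CoxeterMatrix B₂) : CoxeterMatrix (B₁ ⊕ B₂) where
  M i j :=
    match i, j with
    | Sum.inl a, Sum.inl b => M₁ a b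
    | Sum.inr a, Sum.inr b => M₂ a b
    | _, _ => 2
  isSymm := by
    unfold Matrix.IsSymm
    ext i j
    rcases i with a | a <;> rcases j with b | b <;>
      simp only [Matrix.transpose_apply] <;>
      first
        | exact M₁.symmetric b a
        | exact M₂.symmetric b a
        | rfl
  diagonal i := by rcases i with a | a <;> simp [CoxeterMatrix.diagonal]
  off_diagonal i j h := by
    rcases i with a | a <;> rcases j with b | b
    · exact M₁.off_diagonal a b (by rintro rfl; exact h rfl)
    · simp
    · simp
    · exact M₂.off_diagonal a b (by rintro rfl; exact h rfl)

def inlEmb : B₁ ↪ B₁ ⊕ B₂ := ⟨Sum.inl, Sum.inl_injective⟩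
def inrEmb : B₂ ↪ B₁ ⊕ B₂ := ⟨Sum.inr, Sum.inr_injective⟩

/-- The subset `I ⊔ K` of `S = S₁ ⊔ S₂`, for `I ⊆ S₁` and `K ⊆ S₂`. -/
def fjoin (I : Finset B₁) (K : Finset B₂) : Finset (B₁ ⊕ B₂) :=
  I.map inlEmb ∪ K.map inrEmb

/-- The part `I₁ = I ∩ S₁` of a subset `I ⊆ S = S₁ ⊔ S₂`. -/
def part1 (I : Finset (B₁ ⊕ B₂)) : Finset B₁ :=
  I.preimage Sum.inl Sum.inl_injective.injOn

/-- The part `I₂ = I ∩ S₂` of a subset `I ⊆ S = S₁ ⊔ S₂`. -/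
def part2 (I : Finset (B₁ ⊕ B₂)) : Finset B₂ :=
  I.preimage Sum.inr Sum.inr_injective.injOn

variable (M₁ : CoxeterMatrix B₁) (M₂ : CoxeterMatrix B₂)

/-- `f` is the parabolic morphism `ι₁ : Ω₁ → Ω` (it sends `e_s ↦ e_s`, `x_s ↦ x_s`
for `s ∈ S₁`). -/
def Parab1Cond (f : Omega k M₁ → Omega k (prodMatrix M₁ M₂)) : Prop :=
  ∀ b : B₁, f (eOm k M₁ b) = eOm k (prodMatrix M₁ M₂) (Sum.inl b) ∧
    f (xOm k M₁ b) = xOm k (prodMatrix M₁ M₂) (Sum.inl b)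

/-- `f` is the parabolic morphism `ι₂ : Ω₂ → Ω` (it sends `e_s ↦ e_s`, `x_s ↦ x_s`
for `s ∈ S₂`). -/
def Parab2Cond (f : Omega k M₂ → Omega k (prodMatrix M₁ M₂)) : Prop :=
  ∀ b : B₂, f (eOm k M₂ b) = eOm k (prodMatrix M₁ M₂) (Sum.inr b) ∧
    f (xOm k M₂ b) = xOm k (prodMatrix M₁ M₂) (Sum.inr b)

/-- `t` is the morphism `τ : Ω → Ω₁ ⊗ Ω₂` of the paper: it sends `e_s ↦ e_s ⊗ 1`,
`x_s ↦ x_s ⊗ 1` for `s ∈ S₁` and `e_s ↦ 1 ⊗ e_s`, `x_s ↦ 1 ⊗ x_s` for `s ∈ S₂`. -/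
def TauCond (t : Omega k (prodMatrix M₁ M₂) → Omega k M₁ ⊗[k] Omega k M₂) : Prop :=
  (∀ b : B₁, t (eOm k (prodMatrix M₁ M₂) (Sum.inl b)) = eOm k M₁ b ⊗ₜ[k] 1 ∧
      t (xOm k (prodMatrix M₁ M₂) (Sum.inl b)) = xOm k M₁ b ⊗ₜ[k] 1) ∧
  (∀ b : B₂, t (eOm k (prodMatrix M₁ M₂) (Sum.inr b)) = 1 ⊗ₜ[k] eOm k M₂ b ∧
      t (xOm k (prodMatrix M₁ M₂) (Sum.inr b)) = 1 ⊗ₜ[k] xOm k M₂ b)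



/-- The coefficientwise extension of a ring homomorphism to Laurent polynomial rings. -/
def laurentMap {R A : Type*} [Semiring R] [Semiring A] (f : R →+* A) :
    LaurentPolynomial R →+* LaurentPolynomial A :=
  AddMonoidAlgebra.liftNCRingHom (LaurentPolynomial.C.comp f)
    { toFun := fun n => LaurentPolynomial.T (Multiplicative.toAdd n)
      map_one' := LaurentPolynomial.T_zero
      map_mul' := fun _ _ => LaurentPolynomial.T_add _ _ }
    (fun _ n => (LaurentPolynomial.commute_T (Multiplicative.toAdd n) _).symm)

/-- `k` is a good ring for `(W,S)`: it contains `2cos(2π/m_{st})` for all `s,t ∈ S`. -/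
def GoodRing (M : CoxeterMatrix B) (k : Subring ℂ) : Prop :=
  ∀ i j : B, M i j ≠ 0 → (2 * Complex.cos (2 * Real.pi / (M i j : ℂ))) ∈ k

/-- The irreducible complex characters of a finite group `G`. -/
def IrrChar (G : Type) [Group G] : Type :=
  {χ : G → ℂ // ∃ V : FDRep ℂ G, CategoryTheory.Simple V ∧ χ = FDRep.character V}

/-- The degree `d_λ` of an irreducible character `λ` (its value at `1`). -/
def IrrChar.degree {G : Type} [Group G] (χ : IrrChar G) : ℕ := ⌊(χ.val 1).re⌋₊

variable {ι : Type*}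

/-- (Z1): the `F^λ` are a decomposition of the identity into orthogonal idempotents. -/
def Z1 {A : Type*} [Ring A] (F : ι → A) : Prop :=
  (∀ l, F l * F l = F l) ∧ (∀ l m, l ≠ m → F l * F m = 0) ∧ ∑ᶠ l, F l = 1

variable [Fintype B] [DecidableEq B]

/-- (Z2): the decomposition is compatible with the one coming from the path-algebra
structure: `E_I F^λ = F^λ E_I`. -/
def Z2 (M : CoxeterMatrix B) (F : ι → Omega k M) : Prop :=
  ∀ l (I : Finset B), EOm k M I * F l = F l * EOm k M I

/-- (Z3), with a specified partial order `le`: only "downward edges" exist,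
i.e. `F^λ Ω F^μ ≠ 0 → λ ⪯ μ`. -/
def Z3At {A : Type*} [Ring A] (F : ι → A) (le : ι → ι → Prop) : Prop :=
  ∀ l m, (∃ a : A, F l * a * F m ≠ 0) → le l m

/-- (Z3): there is a partial order on `Irr(W)` such that only "downward edges" exist. -/
def Z3 {A : Type*} [Ring A] (F : ι → A) : Prop :=
  ∃ le : ι → ι → Prop, IsPartialOrder ι le ∧ Z3At F le

/-- (Z4): there are surjective `k`-algebra morphisms `k^{d_λ×d_λ} ↠ F^λ kΩ F^λ`. -/
def Z4 (M : CoxeterMatrix B) (F : ι → Omega k M) (d : ι → ℕ) : Prop :=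
  ∀ l, ∃ ψ : Matrix (Fin (d l)) (Fin (d l)) k →ₗ[k] Omega k M,
    (∀ x y, ψ (x * y) = ψ x * ψ y) ∧ ψ 1 = F l ∧
      Set.range ψ = {z | ∃ a : Omega k M, z = F l * a * F l}

/-- (Z5): `F^λ X_{IJ} F^λ ∈ kΨ(W,S)` for all edges `I ← J` of `Q_W`. -/
def Z5 (M : CoxeterMatrix B) (F : ι → Omega k M) : Prop :=
  ∀ l (I J : Finset B) (s : B), QEdge M I J → s ∈ I \ J →
    F l * XOm k M I J s * F l ∈ PsiAlg k M

/-- (Z6): `F^λ ∈ kΨ(W,S)`. -/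
def Z6 (M : CoxeterMatrix B) (F : ι → Omega k M) : Prop :=
  ∀ l, F l ∈ PsiAlg k M

/-- The family satisfies all of (Z1)–(Z6), i.e. the strong W-graph decomposition
conjecture holds via this family (`d` is the degree function on `Irr(W)`). -/
def StrongZ (M : CoxeterMatrix B) (F : ι → Omega k M) (d : ι → ℕ) : Prop :=
  Z1 F ∧ Z2 k M F ∧ Z3 F ∧ Z4 k M F d ∧ Z5 k M F ∧ Z6 k M F

/-- The maximal length (number of steps) of a strict chain for the relation `le`. -/
def orderHeight (le : ι → ι → Prop) : ℕ :=
  sSup {n | ∃ c : Fin (n + 1) → ι, Function.Injective c ∧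
    ∀ i j : Fin (n + 1), i < j → le (c i) (c j)}



section Statement12Aux

open Finset LaurentPolynomial

variable {B : Type*}

lemma eOm_mul_eOm (M : CoxeterMatrix B) (b : B) :
    eOm ℤ M b * eOm ℤ M b = eOm ℤ M b := by
  rw [eOm, ← map_mul]
  exact RingQuot.mkRingHom_rel (OmegaRel.e_idem b)

lemma eOm_mul_xOm (M : CoxeterMatrix B) (b : B) :
    eOm ℤ M b * xOm ℤ M b = xOm ℤ M b := by
  rw [eOm, xOm, ← map_mul]
  exact RingQuot.mkRingHom_rel (OmegaRel.ex b)

lemma xOm_mul_eOm (M : CoxeterMatrix B) (b : B) :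
    xOm ℤ M b * eOm ℤ M b = 0 := by
  rw [eOm, xOm, ← map_mul, ← (RingQuot.mkRingHom (OmegaRel ℤ M)).map_zero]
  exact RingQuot.mkRingHom_rel (OmegaRel.xe b)

lemma braidComm_two {A : Type*} [Ring A] (p q : A) :
    braidComm 2 p q = p * q - q * p := by
  simp [braidComm, altProd]

lemma iotaT_single (b : B) :
    iotaT ℤ b = AddMonoidAlgebra.single (-1) (-(eGen ℤ b)) + AddMonoidAlgebra.single 1 (1 - eGen ℤ b)
      + AddMonoidAlgebra.single 0 (xGen ℤ b) := by
  rw [iotaT, ← single_eq_C_mul_T, ← single_eq_C_mul_T, ← single_eq_C]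

lemma lcoeff_single {R : Type*} [Semiring R] (n m : ℤ) (r : R) :
    lcoeff (AddMonoidAlgebra.single n r : LaurentPolynomial R) m = if n = m then r else 0 :=
  Finsupp.single_apply

lemma lcoeff_sub {R : Type*} [Ring R] (p q : LaurentPolynomial R) (n : ℤ) :
    lcoeff (p - q) n = lcoeff p n - lcoeff q n :=
  Finsupp.sub_apply p.coeff q.coeff n

lemma lcoeff_add {R : Type*} [Semiring R] (p q : LaurentPolynomial R) (n : ℤ) :
    lcoeff (p + q) n = lcoeff p n + lcoeff q n :=
  Finsupp.add_apply p.coeff q.coeff n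

example (M : CoxeterMatrix B) (b b' : B) (h2 : M b b' = 2) : True := by
  have h0 : M b b' ≠ 0 := by rw [h2]; omega
  have hb := RingQuot.mkRingHom_rel (OmegaRel.braid (k := ℤ) b b' h0 (-1))
  rw [h2, braidComm_two, iotaT_single, iotaT_single] at hb
  simp only [add_mul, mul_add, AddMonoidAlgebra.single_mul_single, lcoeff_sub, lcoeff_add,
    lcoeff_single] at hb
  norm_num at hb
  trivial
lemma cross_rel_e (M : CoxeterMatrix B) (b b' : B) (h2 : M b b' = 2) :
    eOm ℤ M b * xOm ℤ M b' + xOm ℤ M b * eOm ℤ M b' =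
      eOm ℤ M b' * xOm ℤ M b + xOm ℤ M b' * eOm ℤ M b := by
  have h0 : M b b' ≠ 0 := by rw [h2]; omega
  have hb := RingQuot.mkRingHom_rel (OmegaRel.braid (k := ℤ) b b' h0 (-1))
  rw [h2, braidComm_two, iotaT_single, iotaT_single] at hb
  simp only [add_mul, mul_add, AddMonoidAlgebra.single_mul_single, lcoeff_sub, lcoeff_add,
    lcoeff_single] at hb
  norm_num at hb
  rw [sub_eq_zero, ← neg_add, ← neg_add, neg_inj] at hb
  show eOm ℤ M b * xOm ℤ M b' + xOm ℤ M b * eOm ℤ M b' = _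
  rw [add_comm (eOm ℤ M b * xOm ℤ M b'), add_comm (eOm ℤ M b' * xOm ℤ M b)]
  exact hb

lemma cross_rel_x (M : CoxeterMatrix B) (b b' : B) (h2 : M b b' = 2) :
    xOm ℤ M b * xOm ℤ M b' = xOm ℤ M b' * xOm ℤ M b := by
  have h0 : M b b' ≠ 0 := by rw [h2]; omega
  have hb := RingQuot.mkRingHom_rel (OmegaRel.braid (k := ℤ) b b' h0 0)
  rw [h2, braidComm_two, iotaT_single, iotaT_single] at hb
  simp only [add_mul, mul_add, AddMonoidAlgebra.single_mul_single, lcoeff_sub, lcoeff_add,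
    lcoeff_single, sub_mul, mul_sub, one_mul, mul_one] at hb
  norm_num at hb
  have hb' :
      -(eOm ℤ M b') + eOm ℤ M b * eOm ℤ M b' + (-(eOm ℤ M b) + eOm ℤ M b * eOm ℤ M b')
          + xOm ℤ M b * xOm ℤ M b'
        - (-(eOm ℤ M b) + eOm ℤ M b' * eOm ℤ M b + (-(eOm ℤ M b') + eOm ℤ M b' * eOm ℤ M b)
          + xOm ℤ M b' * xOm ℤ M b) = 0 := hb
  rw [(commute_eOm ℤ M b b').eq] at hb'
  rw [sub_eq_zero] at hb'
  have hab : -(eOm ℤ M b') + eOm ℤ M b' * eOm ℤ M b + (-(eOm ℤ M b) + eOm ℤ M b' * eOm ℤ M b)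
      = -(eOm ℤ M b) + eOm ℤ M b' * eOm ℤ M b + (-(eOm ℤ M b') + eOm ℤ M b' * eOm ℤ M b) := by
    abel
  rw [hab] at hb'
  exact add_left_cancel hb'

section DD
variable {R : Type*} [Ring R] {a x b y : R}

/-- first derived identity: `(1-b) x b = 0` for a cross pair. -/
lemma dd1 (hbb : b * b = b) (hab : a * b = b * a) (hyb : y * b = 0)
    (hrel : a * y + x * b = b * x + y * a) :
    (1 - b) * x * b = 0 := by
  have h := congrArg (fun z => (1 - b) * z * b) hrel
  simp only [mul_add, add_mul] at h
  have t1 : (1 - b) * (a * y) * b = 0 := by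
    rw [mul_assoc, mul_assoc, hyb, mul_zero, mul_zero]
  have t2 : (1 - b) * (x * b) * b = (1 - b) * x * b := by
    rw [mul_assoc, mul_assoc, hbb, ← mul_assoc]
  have t3 : (1 - b) * (b * x) * b = 0 := by
    rw [← mul_assoc, sub_mul, one_mul, hbb, sub_self, zero_mul, zero_mul]
  have t4 : (1 - b) * (y * a) * b = 0 := by
    rw [mul_assoc, mul_assoc, hab, ← mul_assoc y b a, hyb, zero_mul, mul_zero]
  rw [t1, t2, t3, t4, zero_add, add_zero] at h
  exact h

/-- `x b = b x b` (absorption). -/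
lemma dd2 (hbb : b * b = b) (hab : a * b = b * a) (hyb : y * b = 0)
    (hrel : a * y + x * b = b * x + y * a) :
    b * (x * b) = x * b := by
  have h := dd1 hbb hab hyb hrel
  rw [sub_mul, one_mul, sub_mul, sub_eq_zero] at h
  rw [← mul_assoc]
  exact h.symm

/-- the commutation rule: `b x = x b + a y (1 - a)`. -/
lemma dd3 (haa : a * a = a) (hbb : b * b = b) (hab : a * b = b * a) (hxa : x * a = 0)
    (hyb : y * b = 0) (hrel : a * y + x * b = b * x + y * a) :
    b * x = x * b + a * (y * (1 - a)) := by
  have h2 : b * (x * b) = x * b := dd2 hbb hab hyb hrel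
  have h2' : a * (y * a) = y * a :=
    dd2 (a := b) (x := y) (b := a) (y := x) haa hab.symm hxa hrel.symm
  have hd : b * x - x * b = a * y - y * a := by
    have := hrel
    have h3 : b * x + y * a - (a * y + x * b) = b * x + y * a - (b * x + y * a) := by rw [this]
    rw [sub_self] at h3
    calc b * x - x * b = b * x + y * a - (a * y + x * b) + (a * y - y * a) := by abel
      _ = a * y - y * a := by rw [h3, zero_add]
  have : a * (y * (1 - a)) = a * y - y * a := by
    rw [mul_sub, mul_one, mul_sub, h2']
  rw [this, ← hd]
  abel

end DD

/-- The key vanishing lemma: `(1-a) * w * a = 0` for any product `w` of elements that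
either commute with `a` or satisfy `(1-a) g a = 0`. -/
lemma vanish {R : Type*} [Ring R] (a : R) (ha : a * a = a) :
    ∀ l : List R, (∀ g ∈ l, a * g = g * a ∨ (1 - a) * (g * a) = 0) →
      (1 - a) * (l.prod * a) = 0
  | [], _ => by rw [List.prod_nil, one_mul, sub_mul, one_mul, ha, sub_self]
  | g :: l, h => by
    have hl := vanish a ha l (fun g' hg' => h g' (List.mem_cons_of_mem _ hg'))
    rw [List.prod_cons]
    rcases h g List.mem_cons_self with hc | hz
    · have : (1 - a) * g = g * (1 - a) := by
        rw [sub_mul, mul_sub, one_mul, mul_one, hc]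
      rw [mul_assoc g, ← mul_assoc, this, mul_assoc, hl, mul_zero]
    · have hsplit : l.prod * a = a * (l.prod * a) + (1 - a) * (l.prod * a) := by
        rw [sub_mul, one_mul]; abel
      rw [mul_assoc g, hsplit, hl, add_zero, ← mul_assoc g a, ← mul_assoc (1-a) (g*a),
        hz, zero_mul]

section NCP
variable {C : Type*} [DecidableEq C] {Mo : Type*} [Monoid Mo]

lemma ncp_list (s : Finset C) (f : C → Mo) (comm : ∀ a b : C, Commute (f a) (f b)) :
    ∃ l : List Mo, l.prod = s.noncommProd f (fun a _ b _ _ => comm a b) ∧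
      ∀ g ∈ l, ∃ c, g = f c := by
  induction s using Finset.cons_induction with
  | empty => exact ⟨[], by rw [List.prod_nil]; erw [Finset.noncommProd_empty], by simp⟩
  | cons a s ha ih =>
    obtain ⟨l, hl, hm⟩ := ih
    refine ⟨f a :: l, ?_, ?_⟩
    · rw [List.prod_cons, hl]; erw [Finset.noncommProd_cons]
    · intro g hg
      rcases List.mem_cons.mp hg with rfl | hg
      · exact ⟨a, rfl⟩
      · exact hm g hg

lemma ncp_idem (s : Finset C) (f : C → Mo) (comm : ∀ a b : C, Commute (f a) (f b))
    (idem : ∀ c, f c * f c = f c) :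
    s.noncommProd f (fun a _ b _ _ => comm a b) * s.noncommProd f (fun a _ b _ _ => comm a b)
      = s.noncommProd f (fun a _ b _ _ => comm a b) := by
  induction s using Finset.cons_induction with
  | empty => erw [Finset.noncommProd_empty, one_mul]
  | cons a s ha ih =>
    erw [Finset.noncommProd_cons]
    have hc : Commute (s.noncommProd f (fun a _ b _ _ => comm a b)) (f a) :=
      (Finset.noncommProd_commute _ _ _ _ (fun x _ => comm a x)).symm
    rw [hc.mul_mul_mul_comm, idem a, ih]

lemma ncp_mul_mem (s : Finset C) (f : C → Mo) (comm : ∀ a b : C, Commute (f a) (f b))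
    (idem : ∀ c, f c * f c = f c) {c : C} (hc : c ∈ s) :
    s.noncommProd f (fun a _ b _ _ => comm a b) * f c
      = s.noncommProd f (fun a _ b _ _ => comm a b) := by
  rw [← Finset.noncommProd_erase_mul _ hc f (fun a _ b _ _ => comm a b), mul_assoc, idem c]

lemma ncp_mem_mul (s : Finset C) (f : C → Mo) (comm : ∀ a b : C, Commute (f a) (f b))
    (idem : ∀ c, f c * f c = f c) {c : C} (hc : c ∈ s) :
    f c * s.noncommProd f (fun a _ b _ _ => comm a b)
      = s.noncommProd f (fun a _ b _ _ => comm a b) := by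
  rw [← Finset.mul_noncommProd_erase _ hc f (fun a _ b _ _ => comm a b), ← mul_assoc, idem c]

lemma ncp_commute (s : Finset C) (f : C → Mo) (comm : ∀ a b : C, Commute (f a) (f b)) (z : Mo)
    (h : ∀ c, Commute z (f c)) :
    Commute z (s.noncommProd f (fun a _ b _ _ => comm a b)) :=
  Finset.noncommProd_commute _ _ _ _ (fun x _ => h x)

lemma list_prod_commute (l : List Mo) (z : Mo) (h : ∀ g ∈ l, Commute z g) :
    Commute z l.prod := by
  induction l with
  | nil => simpa using Commute.one_right z
  | cons g l ih =>
    rw [List.prod_cons]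
    exact (h g List.mem_cons_self).mul_right
      (ih fun g' hg' => h g' (List.mem_cons_of_mem _ hg'))

end NCP

section ProdSplit
variable {B₁ B₂ : Type*} [Fintype B₁] [DecidableEq B₁] [Fintype B₂] [DecidableEq B₂]
  (M₁ : CoxeterMatrix B₁) (M₂ : CoxeterMatrix B₂)

/-- `ι₁(E_I)` as an explicit product in the big algebra. -/
def pA (I : Finset B₁) : Omega ℤ (prodMatrix M₁ M₂) :=
  I.noncommProd (fun b => eOm ℤ (prodMatrix M₁ M₂) (Sum.inl b))
      (fun _ _ _ _ _ => commute_eOm ℤ _ _ _) *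
    Iᶜ.noncommProd (fun b => 1 - eOm ℤ (prodMatrix M₁ M₂) (Sum.inl b))
      (fun _ _ _ _ _ => commute_oneSubEOm ℤ _ _ _)

/-- `ι₂(E_K)` as an explicit product in the big algebra. -/
def pP (K : Finset B₂) : Omega ℤ (prodMatrix M₁ M₂) :=
  K.noncommProd (fun b => eOm ℤ (prodMatrix M₁ M₂) (Sum.inr b))
      (fun _ _ _ _ _ => commute_eOm ℤ _ _ _) *
    Kᶜ.noncommProd (fun b => 1 - eOm ℤ (prodMatrix M₁ M₂) (Sum.inr b))
      (fun _ _ _ _ _ => commute_oneSubEOm ℤ _ _ _)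

lemma ncp_map_emb {C D : Type*} {Mo : Type*} [Monoid Mo] (s : Finset C) (e : C ↪ D)
    (f : D → Mo) (comm : ∀ a b : D, Commute (f a) (f b)) :
    (s.map e).noncommProd f (fun _ _ _ _ _ => comm _ _)
      = s.noncommProd (fun c => f (e c)) (fun _ _ _ _ _ => comm _ _) := by
  simp only [Finset.noncommProd, Finset.map_val, Multiset.map_map]
  rfl

lemma compl_fjoin (I : Finset B₁) (K : Finset B₂) :
    (fjoin I K)ᶜ = fjoin Iᶜ Kᶜ := by
  ext c
  cases c <;>
    simp [fjoin, inlEmb, inrEmb, Finset.mem_union, Finset.mem_map,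
      Function.Embedding.coeFn_mk]

lemma disj_fjoin (I : Finset B₁) (K : Finset B₂) :
    Disjoint (I.map inlEmb) (K.map inrEmb) := by
  simp only [Finset.disjoint_left, Finset.mem_map, inlEmb, inrEmb,
    Function.Embedding.coeFn_mk]
  rintro a ⟨x, -, rfl⟩ ⟨y, -, h⟩
  exact Sum.inl_ne_inr h.symm

lemma f1_EOm (f₁ : Omega ℤ M₁ →+* Omega ℤ (prodMatrix M₁ M₂)) (h₁ : Parab1Cond ℤ M₁ M₂ ⇑f₁)
    (I : Finset B₁) : f₁ (EOm ℤ M₁ I) = pA M₁ M₂ I := by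
  erw [EOm, map_mul, Finset.map_noncommProd _ _ _ f₁, Finset.map_noncommProd _ _ _ f₁, pA]
  congr 1
  · exact Finset.noncommProd_congr rfl (fun b _ => (h₁ b).1) _
  · refine Finset.noncommProd_congr rfl (fun b _ => ?_) _
    rw [map_sub, map_one, (h₁ b).1]

lemma f2_EOm (f₂ : Omega ℤ M₂ →+* Omega ℤ (prodMatrix M₁ M₂)) (h₂ : Parab2Cond ℤ M₁ M₂ ⇑f₂)
    (K : Finset B₂) : f₂ (EOm ℤ M₂ K) = pP M₁ M₂ K := by
  erw [EOm, map_mul, Finset.map_noncommProd _ _ _ f₂, Finset.map_noncommProd _ _ _ f₂, pP]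
  congr 1
  · exact Finset.noncommProd_congr rfl (fun b _ => (h₂ b).1) _
  · refine Finset.noncommProd_congr rfl (fun b _ => ?_) _
    rw [map_sub, map_one, (h₂ b).1]

lemma EOm_fjoin (I : Finset B₁) (K : Finset B₂) :
    EOm ℤ (prodMatrix M₁ M₂) (fjoin I K) = pA M₁ M₂ I * pP M₁ M₂ K := by
  have he : ∀ a b : B₁ ⊕ B₂,
      Commute (eOm ℤ (prodMatrix M₁ M₂) a) (eOm ℤ (prodMatrix M₁ M₂) b) :=
    fun a b => commute_eOm ℤ _ a b
  have hs : ∀ a b : B₁ ⊕ B₂,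
      Commute (1 - eOm ℤ (prodMatrix M₁ M₂) a) (1 - eOm ℤ (prodMatrix M₁ M₂) b) :=
    fun a b => commute_oneSubEOm ℤ _ a b
  rw [EOm]
  have h1 : (fjoin I K).noncommProd (fun b => eOm ℤ (prodMatrix M₁ M₂) b)
      (fun _ _ _ _ _ => commute_eOm ℤ _ _ _)
      = I.noncommProd (fun b => eOm ℤ (prodMatrix M₁ M₂) (Sum.inl b))
          (fun _ _ _ _ _ => commute_eOm ℤ _ _ _)
        * K.noncommProd (fun b => eOm ℤ (prodMatrix M₁ M₂) (Sum.inr b))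
          (fun _ _ _ _ _ => commute_eOm ℤ _ _ _) := by
    erw [show fjoin I K = I.map inlEmb ∪ K.map inrEmb from rfl,
      Finset.noncommProd_union_of_disjoint (disj_fjoin I K),
      ncp_map_emb _ _ _ he, ncp_map_emb _ _ _ he]
    rfl
  have h2 : ((fjoin I K)ᶜ).noncommProd (fun b => 1 - eOm ℤ (prodMatrix M₁ M₂) b)
      (fun _ _ _ _ _ => commute_oneSubEOm ℤ _ _ _)
      = Iᶜ.noncommProd (fun b => 1 - eOm ℤ (prodMatrix M₁ M₂) (Sum.inl b))
          (fun _ _ _ _ _ => commute_oneSubEOm ℤ _ _ _)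
        * Kᶜ.noncommProd (fun b => 1 - eOm ℤ (prodMatrix M₁ M₂) (Sum.inr b))
          (fun _ _ _ _ _ => commute_oneSubEOm ℤ _ _ _) := by
    erw [compl_fjoin, show fjoin Iᶜ Kᶜ = Iᶜ.map inlEmb ∪ Kᶜ.map inrEmb from rfl,
      Finset.noncommProd_union_of_disjoint (disj_fjoin Iᶜ Kᶜ),
      ncp_map_emb _ _ _ hs, ncp_map_emb _ _ _ hs]
    rfl
  rw [h1, h2, pA, pP]
  have hmid : Commute
      (K.noncommProd (fun b => eOm ℤ (prodMatrix M₁ M₂) (Sum.inr b))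
        (fun _ _ _ _ _ => commute_eOm ℤ _ _ _))
      (Iᶜ.noncommProd (fun b => 1 - eOm ℤ (prodMatrix M₁ M₂) (Sum.inl b))
        (fun _ _ _ _ _ => commute_oneSubEOm ℤ _ _ _)) := by
    refine Finset.noncommProd_commute _ _ _ _ (fun x _ => ?_)
    exact (Finset.noncommProd_commute _ _ _ _ (fun y _ =>
      (Commute.one_left _).sub_left (commute_eOm ℤ _ _ _))).symm
  exact hmid.mul_mul_mul_comm _ _
end ProdSplit

section PAPP
variable {B₁ B₂ : Type*} [Fintype B₁] [DecidableEq B₁] [Fintype B₂] [DecidableEq B₂]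
  (M₁ : CoxeterMatrix B₁) (M₂ : CoxeterMatrix B₂)

lemma commute_e_pA (d : B₁ ⊕ B₂) (I : Finset B₁) :
    Commute (eOm ℤ (prodMatrix M₁ M₂) d) (pA M₁ M₂ I) := by
  refine Commute.mul_right ?_ ?_
  · exact Finset.noncommProd_commute _ _ _ _ (fun x _ => commute_eOm ℤ _ _ _)
  · exact Finset.noncommProd_commute _ _ _ _ (fun x _ =>
      (Commute.one_right _).sub_right (commute_eOm ℤ _ _ _))

lemma commute_e_pP (d : B₁ ⊕ B₂) (K : Finset B₂) :
    Commute (eOm ℤ (prodMatrix M₁ M₂) d) (pP M₁ M₂ K) := by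
  refine Commute.mul_right ?_ ?_
  · exact Finset.noncommProd_commute _ _ _ _ (fun x _ => commute_eOm ℤ _ _ _)
  · exact Finset.noncommProd_commute _ _ _ _ (fun x _ =>
      (Commute.one_right _).sub_right (commute_eOm ℤ _ _ _))

lemma commute_oneSubE_pA (d : B₁ ⊕ B₂) (I : Finset B₁) :
    Commute (1 - eOm ℤ (prodMatrix M₁ M₂) d) (pA M₁ M₂ I) :=
  (Commute.one_left _).sub_left (commute_e_pA M₁ M₂ d I)

lemma commute_oneSubE_pP (d : B₁ ⊕ B₂) (K : Finset B₂) :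
    Commute (1 - eOm ℤ (prodMatrix M₁ M₂) d) (pP M₁ M₂ K) :=
  (Commute.one_left _).sub_left (commute_e_pP M₁ M₂ d K)

lemma commute_pA_pP (I : Finset B₁) (K : Finset B₂) :
    Commute (pA M₁ M₂ I) (pP M₁ M₂ K) := by
  refine Commute.mul_left ?_ ?_
  · exact (Finset.noncommProd_commute _ _ _ _
      (fun x _ => (commute_e_pP M₁ M₂ (Sum.inl x) K).symm)).symm
  · exact (Finset.noncommProd_commute _ _ _ _
      (fun x _ => (commute_oneSubE_pP M₁ M₂ (Sum.inl x) K).symm)).symm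

lemma pA_idem (I : Finset B₁) : pA M₁ M₂ I * pA M₁ M₂ I = pA M₁ M₂ I := by
  rw [pA]
  have h1 := ncp_idem I (fun b => eOm ℤ (prodMatrix M₁ M₂) (Sum.inl b))
    (fun a b => commute_eOm ℤ _ _ _) (fun c => eOm_mul_eOm _ _)
  have h2 := ncp_idem Iᶜ (fun b => 1 - eOm ℤ (prodMatrix M₁ M₂) (Sum.inl b))
    (fun a b => commute_oneSubEOm ℤ _ _ _)
    (fun c => by
      have h := eOm_mul_eOm (prodMatrix M₁ M₂) (Sum.inl c)
      rw [mul_sub, sub_mul, sub_mul, mul_one, one_mul, mul_one, h]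
      abel)
  have hmid : Commute
      (Iᶜ.noncommProd (fun b => 1 - eOm ℤ (prodMatrix M₁ M₂) (Sum.inl b))
        (fun _ _ _ _ _ => commute_oneSubEOm ℤ _ _ _))
      (I.noncommProd (fun b => eOm ℤ (prodMatrix M₁ M₂) (Sum.inl b))
        (fun _ _ _ _ _ => commute_eOm ℤ _ _ _)) := by
    refine Finset.noncommProd_commute _ _ _ _ (fun x _ => ?_)
    exact (Finset.noncommProd_commute _ _ _ _ (fun y _ =>
      ((Commute.one_right _).sub_right (commute_eOm ℤ _ _ _)))).symm
  rw [hmid.mul_mul_mul_comm, h1, h2]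

lemma pP_idem (K : Finset B₂) : pP M₁ M₂ K * pP M₁ M₂ K = pP M₁ M₂ K := by
  rw [pP]
  have h1 := ncp_idem K (fun b => eOm ℤ (prodMatrix M₁ M₂) (Sum.inr b))
    (fun a b => commute_eOm ℤ _ _ _) (fun c => eOm_mul_eOm _ _)
  have h2 := ncp_idem Kᶜ (fun b => 1 - eOm ℤ (prodMatrix M₁ M₂) (Sum.inr b))
    (fun a b => commute_oneSubEOm ℤ _ _ _)
    (fun c => by
      have h := eOm_mul_eOm (prodMatrix M₁ M₂) (Sum.inr c)
      rw [mul_sub, sub_mul, sub_mul, mul_one, one_mul, mul_one, h]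
      abel)
  have hmid : Commute
      (Kᶜ.noncommProd (fun b => 1 - eOm ℤ (prodMatrix M₁ M₂) (Sum.inr b))
        (fun _ _ _ _ _ => commute_oneSubEOm ℤ _ _ _))
      (K.noncommProd (fun b => eOm ℤ (prodMatrix M₁ M₂) (Sum.inr b))
        (fun _ _ _ _ _ => commute_eOm ℤ _ _ _)) := by
    refine Finset.noncommProd_commute _ _ _ _ (fun x _ => ?_)
    exact (Finset.noncommProd_commute _ _ _ _ (fun y _ =>
      ((Commute.one_right _).sub_right (commute_eOm ℤ _ _ _)))).symm
  rw [hmid.mul_mul_mul_comm, h1, h2]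

lemma pA_mul_e {I : Finset B₁} {c : B₁} (hc : c ∈ I) :
    pA M₁ M₂ I * eOm ℤ (prodMatrix M₁ M₂) (Sum.inl c) = pA M₁ M₂ I := by
  rw [pA]
  have h2 : Commute (eOm ℤ (prodMatrix M₁ M₂) (Sum.inl c))
      (Iᶜ.noncommProd (fun b => 1 - eOm ℤ (prodMatrix M₁ M₂) (Sum.inl b))
        (fun _ _ _ _ _ => commute_oneSubEOm ℤ _ _ _)) :=
    Finset.noncommProd_commute _ _ _ _ (fun x _ =>
      (Commute.one_right _).sub_right (commute_eOm ℤ _ _ _))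
  rw [mul_assoc, ← h2.eq, ← mul_assoc,
    ncp_mul_mem I (fun b => eOm ℤ (prodMatrix M₁ M₂) (Sum.inl b))
      (fun a b => commute_eOm ℤ _ _ _) (fun c => eOm_mul_eOm _ _) hc]

lemma oneSubE_mul_pA {I : Finset B₁} {c : B₁} (hc : c ∉ I) :
    (1 - eOm ℤ (prodMatrix M₁ M₂) (Sum.inl c)) * pA M₁ M₂ I = pA M₁ M₂ I := by
  rw [pA]
  have h1 : Commute (1 - eOm ℤ (prodMatrix M₁ M₂) (Sum.inl c))
      (I.noncommProd (fun b => eOm ℤ (prodMatrix M₁ M₂) (Sum.inl b))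
        (fun _ _ _ _ _ => commute_eOm ℤ _ _ _)) :=
    Finset.noncommProd_commute _ _ _ _ (fun x _ =>
      (Commute.one_left _).sub_left (commute_eOm ℤ _ _ _))
  rw [← mul_assoc, h1.eq, mul_assoc,
    ncp_mem_mul Iᶜ (fun b => 1 - eOm ℤ (prodMatrix M₁ M₂) (Sum.inl b))
      (fun a b => commute_oneSubEOm ℤ _ _ _)
      (fun d => by
        have h := eOm_mul_eOm (prodMatrix M₁ M₂) (Sum.inl d)
        rw [mul_sub, sub_mul, sub_mul, mul_one, one_mul, mul_one, h]; abel)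
      (Finset.mem_compl.mpr hc)]

lemma pP_mul_e {K : Finset B₂} {c : B₂} (hc : c ∈ K) :
    pP M₁ M₂ K * eOm ℤ (prodMatrix M₁ M₂) (Sum.inr c) = pP M₁ M₂ K := by
  rw [pP]
  have h2 : Commute (eOm ℤ (prodMatrix M₁ M₂) (Sum.inr c))
      (Kᶜ.noncommProd (fun b => 1 - eOm ℤ (prodMatrix M₁ M₂) (Sum.inr b))
        (fun _ _ _ _ _ => commute_oneSubEOm ℤ _ _ _)) :=
    Finset.noncommProd_commute _ _ _ _ (fun x _ =>
      (Commute.one_right _).sub_right (commute_eOm ℤ _ _ _))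
  rw [mul_assoc, ← h2.eq, ← mul_assoc,
    ncp_mul_mem K (fun b => eOm ℤ (prodMatrix M₁ M₂) (Sum.inr b))
      (fun a b => commute_eOm ℤ _ _ _) (fun c => eOm_mul_eOm _ _) hc]

lemma oneSubE_mul_pP {K : Finset B₂} {c : B₂} (hc : c ∉ K) :
    (1 - eOm ℤ (prodMatrix M₁ M₂) (Sum.inr c)) * pP M₁ M₂ K = pP M₁ M₂ K := by
  rw [pP]
  have h1 : Commute (1 - eOm ℤ (prodMatrix M₁ M₂) (Sum.inr c))
      (K.noncommProd (fun b => eOm ℤ (prodMatrix M₁ M₂) (Sum.inr b))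
        (fun _ _ _ _ _ => commute_eOm ℤ _ _ _)) :=
    Finset.noncommProd_commute _ _ _ _ (fun x _ =>
      (Commute.one_left _).sub_left (commute_eOm ℤ _ _ _))
  rw [← mul_assoc, h1.eq, mul_assoc,
    ncp_mem_mul Kᶜ (fun b => 1 - eOm ℤ (prodMatrix M₁ M₂) (Sum.inr b))
      (fun a b => commute_oneSubEOm ℤ _ _ _)
      (fun d => by
        have h := eOm_mul_eOm (prodMatrix M₁ M₂) (Sum.inr d)
        rw [mul_sub, sub_mul, sub_mul, mul_one, one_mul, mul_one, h]; abel)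
      (Finset.mem_compl.mpr hc)]

end PAPP

section Core
variable {B₁ B₂ : Type*} [Fintype B₁] [DecidableEq B₁] [Fintype B₂] [DecidableEq B₂]
  (M₁ : CoxeterMatrix B₁) (M₂ : CoxeterMatrix B₂)

example (c : B₁) (d : B₂) : prodMatrix M₁ M₂ (Sum.inl c) (Sum.inr d) = 2 := rfl
example (c : B₁) (d : B₂) : prodMatrix M₁ M₂ (Sum.inr d) (Sum.inl c) = 2 := rfl

lemma hd1a (c : B₁) (d : B₂) :
    (1 - eOm ℤ (prodMatrix M₁ M₂) (Sum.inr d)) *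
      (xOm ℤ (prodMatrix M₁ M₂) (Sum.inl c) * eOm ℤ (prodMatrix M₁ M₂) (Sum.inr d)) = 0 := by
  have h := dd1 (a := eOm ℤ (prodMatrix M₁ M₂) (Sum.inl c))
    (x := xOm ℤ (prodMatrix M₁ M₂) (Sum.inl c))
    (b := eOm ℤ (prodMatrix M₁ M₂) (Sum.inr d))
    (y := xOm ℤ (prodMatrix M₁ M₂) (Sum.inr d))
    (eOm_mul_eOm _ _) ((commute_eOm ℤ _ _ _).eq) (xOm_mul_eOm _ _)
    (cross_rel_e _ (Sum.inl c) (Sum.inr d) rfl)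
  rw [mul_assoc] at h
  exact h

lemma hd1b (d : B₂) (c : B₁) :
    (1 - eOm ℤ (prodMatrix M₁ M₂) (Sum.inl c)) *
      (xOm ℤ (prodMatrix M₁ M₂) (Sum.inr d) * eOm ℤ (prodMatrix M₁ M₂) (Sum.inl c)) = 0 := by
  have h := dd1 (a := eOm ℤ (prodMatrix M₁ M₂) (Sum.inr d))
    (x := xOm ℤ (prodMatrix M₁ M₂) (Sum.inr d))
    (b := eOm ℤ (prodMatrix M₁ M₂) (Sum.inl c))
    (y := xOm ℤ (prodMatrix M₁ M₂) (Sum.inl c))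
    (eOm_mul_eOm _ _) ((commute_eOm ℤ _ _ _).eq) (xOm_mul_eOm _ _)
    (cross_rel_e _ (Sum.inr d) (Sum.inl c) rfl)
  rw [mul_assoc] at h
  exact h

lemma hd3a (c : B₁) (d : B₂) :
    eOm ℤ (prodMatrix M₁ M₂) (Sum.inr d) * xOm ℤ (prodMatrix M₁ M₂) (Sum.inl c)
      = xOm ℤ (prodMatrix M₁ M₂) (Sum.inl c) * eOm ℤ (prodMatrix M₁ M₂) (Sum.inr d)
        + eOm ℤ (prodMatrix M₁ M₂) (Sum.inl c) *
          (xOm ℤ (prodMatrix M₁ M₂) (Sum.inr d) *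
            (1 - eOm ℤ (prodMatrix M₁ M₂) (Sum.inl c))) :=
  dd3 (eOm_mul_eOm _ _) (eOm_mul_eOm _ _) ((commute_eOm ℤ _ _ _).eq) (xOm_mul_eOm _ _)
    (xOm_mul_eOm _ _) (cross_rel_e _ (Sum.inl c) (Sum.inr d) rfl)

lemma hd3b (d : B₂) (c : B₁) :
    eOm ℤ (prodMatrix M₁ M₂) (Sum.inl c) * xOm ℤ (prodMatrix M₁ M₂) (Sum.inr d)
      = xOm ℤ (prodMatrix M₁ M₂) (Sum.inr d) * eOm ℤ (prodMatrix M₁ M₂) (Sum.inl c)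
        + eOm ℤ (prodMatrix M₁ M₂) (Sum.inr d) *
          (xOm ℤ (prodMatrix M₁ M₂) (Sum.inl c) *
            (1 - eOm ℤ (prodMatrix M₁ M₂) (Sum.inr d))) :=
  dd3 (eOm_mul_eOm _ _) (eOm_mul_eOm _ _) ((commute_eOm ℤ _ _ _).eq) (xOm_mul_eOm _ _)
    (xOm_mul_eOm _ _) (cross_rel_e _ (Sum.inr d) (Sum.inl c) rfl)

end Core

section ML
variable {B₁ B₂ : Type*} [Fintype B₁] [DecidableEq B₁] [Fintype B₂] [DecidableEq B₂]
  (M₁ : CoxeterMatrix B₁) (M₂ : CoxeterMatrix B₂)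

lemma ML1 {K L : Finset B₂} {t₁ : B₂} (ht₁K : t₁ ∉ K) (ht₁L : t₁ ∈ L)
    (w : List (Omega ℤ (prodMatrix M₁ M₂)))
    (hw : ∀ g ∈ w,
      eOm ℤ (prodMatrix M₁ M₂) (Sum.inr t₁) * g = g * eOm ℤ (prodMatrix M₁ M₂) (Sum.inr t₁) ∨
      (1 - eOm ℤ (prodMatrix M₁ M₂) (Sum.inr t₁)) *
        (g * eOm ℤ (prodMatrix M₁ M₂) (Sum.inr t₁)) = 0) :
    pP M₁ M₂ K * (w.prod * pP M₁ M₂ L) = 0 := by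
  have hv := vanish (eOm ℤ (prodMatrix M₁ M₂) (Sum.inr t₁)) (eOm_mul_eOm _ _) w hw
  have hPdec : pP M₁ M₂ K
      = K.noncommProd (fun b => eOm ℤ (prodMatrix M₁ M₂) (Sum.inr b))
          (fun _ _ _ _ _ => commute_eOm ℤ _ _ _) *
        ((Kᶜ.erase t₁).noncommProd (fun b => 1 - eOm ℤ (prodMatrix M₁ M₂) (Sum.inr b))
            (fun _ hx _ hy _ => commute_oneSubEOm ℤ _ _ _) *
          (1 - eOm ℤ (prodMatrix M₁ M₂) (Sum.inr t₁))) := by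
    rw [pP, ← Finset.noncommProd_erase_mul Kᶜ (Finset.mem_compl.mpr ht₁K)
      (fun b => 1 - eOm ℤ (prodMatrix M₁ M₂) (Sum.inr b)) (fun _ _ _ _ _ => commute_oneSubEOm ℤ _ _ _)]
  have hQdec : pP M₁ M₂ L
      = (eOm ℤ (prodMatrix M₁ M₂) (Sum.inr t₁) *
          (L.erase t₁).noncommProd (fun b => eOm ℤ (prodMatrix M₁ M₂) (Sum.inr b))
            (fun _ hx _ hy _ => commute_eOm ℤ _ _ _)) *
        Lᶜ.noncommProd (fun b => 1 - eOm ℤ (prodMatrix M₁ M₂) (Sum.inr b))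
          (fun _ _ _ _ _ => commute_oneSubEOm ℤ _ _ _) := by
    rw [pP, ← Finset.mul_noncommProd_erase L ht₁L
      (fun b => eOm ℤ (prodMatrix M₁ M₂) (Sum.inr b)) (fun _ _ _ _ _ => commute_eOm ℤ _ _ _)]
  rw [hPdec, hQdec]
  have hre : K.noncommProd (fun b => eOm ℤ (prodMatrix M₁ M₂) (Sum.inr b))
        (fun _ _ _ _ _ => commute_eOm ℤ _ _ _) *
      ((Kᶜ.erase t₁).noncommProd (fun b => 1 - eOm ℤ (prodMatrix M₁ M₂) (Sum.inr b))
          (fun _ hx _ hy _ => commute_oneSubEOm ℤ _ _ _) *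
        (1 - eOm ℤ (prodMatrix M₁ M₂) (Sum.inr t₁))) *
      (w.prod * ((eOm ℤ (prodMatrix M₁ M₂) (Sum.inr t₁) *
          (L.erase t₁).noncommProd (fun b => eOm ℤ (prodMatrix M₁ M₂) (Sum.inr b))
            (fun _ hx _ hy _ => commute_eOm ℤ _ _ _)) *
        Lᶜ.noncommProd (fun b => 1 - eOm ℤ (prodMatrix M₁ M₂) (Sum.inr b))
          (fun _ _ _ _ _ => commute_oneSubEOm ℤ _ _ _)))
    = K.noncommProd (fun b => eOm ℤ (prodMatrix M₁ M₂) (Sum.inr b))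
        (fun _ _ _ _ _ => commute_eOm ℤ _ _ _) *
      ((Kᶜ.erase t₁).noncommProd (fun b => 1 - eOm ℤ (prodMatrix M₁ M₂) (Sum.inr b))
          (fun _ hx _ hy _ => commute_oneSubEOm ℤ _ _ _) *
        (((1 - eOm ℤ (prodMatrix M₁ M₂) (Sum.inr t₁)) *
            (w.prod * eOm ℤ (prodMatrix M₁ M₂) (Sum.inr t₁))) *
          ((L.erase t₁).noncommProd (fun b => eOm ℤ (prodMatrix M₁ M₂) (Sum.inr b))
            (fun _ hx _ hy _ => commute_eOm ℤ _ _ _) *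
          Lᶜ.noncommProd (fun b => 1 - eOm ℤ (prodMatrix M₁ M₂) (Sum.inr b))
            (fun _ _ _ _ _ => commute_oneSubEOm ℤ _ _ _)))) := by
    simp only [mul_assoc]
  rw [hre, hv, zero_mul, mul_zero, mul_zero]

lemma ML2 {I J : Finset B₁} {s₁ : B₁} (hs₁I : s₁ ∉ I) (hs₁J : s₁ ∈ J)
    (w : List (Omega ℤ (prodMatrix M₁ M₂)))
    (hw : ∀ g ∈ w,
      eOm ℤ (prodMatrix M₁ M₂) (Sum.inl s₁) * g = g * eOm ℤ (prodMatrix M₁ M₂) (Sum.inl s₁) ∨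
      (1 - eOm ℤ (prodMatrix M₁ M₂) (Sum.inl s₁)) *
        (g * eOm ℤ (prodMatrix M₁ M₂) (Sum.inl s₁)) = 0) :
    pA M₁ M₂ I * (w.prod * pA M₁ M₂ J) = 0 := by
  have hv := vanish (eOm ℤ (prodMatrix M₁ M₂) (Sum.inl s₁)) (eOm_mul_eOm _ _) w hw
  have hPdec : pA M₁ M₂ I
      = I.noncommProd (fun b => eOm ℤ (prodMatrix M₁ M₂) (Sum.inl b))
          (fun _ _ _ _ _ => commute_eOm ℤ _ _ _) *
        ((Iᶜ.erase s₁).noncommProd (fun b => 1 - eOm ℤ (prodMatrix M₁ M₂) (Sum.inl b))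
            (fun _ hx _ hy _ => commute_oneSubEOm ℤ _ _ _) *
          (1 - eOm ℤ (prodMatrix M₁ M₂) (Sum.inl s₁))) := by
    rw [pA, ← Finset.noncommProd_erase_mul Iᶜ (Finset.mem_compl.mpr hs₁I)
      (fun b => 1 - eOm ℤ (prodMatrix M₁ M₂) (Sum.inl b)) (fun _ _ _ _ _ => commute_oneSubEOm ℤ _ _ _)]
  have hQdec : pA M₁ M₂ J
      = (eOm ℤ (prodMatrix M₁ M₂) (Sum.inl s₁) *
          (J.erase s₁).noncommProd (fun b => eOm ℤ (prodMatrix M₁ M₂) (Sum.inl b))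
            (fun _ hx _ hy _ => commute_eOm ℤ _ _ _)) *
        Jᶜ.noncommProd (fun b => 1 - eOm ℤ (prodMatrix M₁ M₂) (Sum.inl b))
          (fun _ _ _ _ _ => commute_oneSubEOm ℤ _ _ _) := by
    rw [pA, ← Finset.mul_noncommProd_erase J hs₁J
      (fun b => eOm ℤ (prodMatrix M₁ M₂) (Sum.inl b)) (fun _ _ _ _ _ => commute_eOm ℤ _ _ _)]
  rw [hPdec, hQdec]
  have hre : I.noncommProd (fun b => eOm ℤ (prodMatrix M₁ M₂) (Sum.inl b))
        (fun _ _ _ _ _ => commute_eOm ℤ _ _ _) *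
      ((Iᶜ.erase s₁).noncommProd (fun b => 1 - eOm ℤ (prodMatrix M₁ M₂) (Sum.inl b))
          (fun _ hx _ hy _ => commute_oneSubEOm ℤ _ _ _) *
        (1 - eOm ℤ (prodMatrix M₁ M₂) (Sum.inl s₁))) *
      (w.prod * ((eOm ℤ (prodMatrix M₁ M₂) (Sum.inl s₁) *
          (J.erase s₁).noncommProd (fun b => eOm ℤ (prodMatrix M₁ M₂) (Sum.inl b))
            (fun _ hx _ hy _ => commute_eOm ℤ _ _ _)) *
        Jᶜ.noncommProd (fun b => 1 - eOm ℤ (prodMatrix M₁ M₂) (Sum.inl b))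
          (fun _ _ _ _ _ => commute_oneSubEOm ℤ _ _ _)))
    = I.noncommProd (fun b => eOm ℤ (prodMatrix M₁ M₂) (Sum.inl b))
        (fun _ _ _ _ _ => commute_eOm ℤ _ _ _) *
      ((Iᶜ.erase s₁).noncommProd (fun b => 1 - eOm ℤ (prodMatrix M₁ M₂) (Sum.inl b))
          (fun _ hx _ hy _ => commute_oneSubEOm ℤ _ _ _) *
        (((1 - eOm ℤ (prodMatrix M₁ M₂) (Sum.inl s₁)) *
            (w.prod * eOm ℤ (prodMatrix M₁ M₂) (Sum.inl s₁))) *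
          ((J.erase s₁).noncommProd (fun b => eOm ℤ (prodMatrix M₁ M₂) (Sum.inl b))
            (fun _ hx _ hy _ => commute_eOm ℤ _ _ _) *
          Jᶜ.noncommProd (fun b => 1 - eOm ℤ (prodMatrix M₁ M₂) (Sum.inl b))
            (fun _ _ _ _ _ => commute_oneSubEOm ℤ _ _ _)))) := by
    simp only [mul_assoc]
  rw [hre, hv, zero_mul, mul_zero, mul_zero]

end ML

section Move
variable {B₁ B₂ : Type*} [Fintype B₁] [DecidableEq B₁] [Fintype B₂] [DecidableEq B₂]
  (M₁ : CoxeterMatrix B₁) (M₂ : CoxeterMatrix B₂)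

lemma moveB {K : Finset B₂} {u : B₂} (huK : u ∈ K) :
    ∀ l : List (Omega ℤ (prodMatrix M₁ M₂)),
      (∀ g ∈ l, ∃ c : B₁, g = eOm ℤ (prodMatrix M₁ M₂) (Sum.inl c) ∨
        g = 1 - eOm ℤ (prodMatrix M₁ M₂) (Sum.inl c)) →
      ∀ V : Omega ℤ (prodMatrix M₁ M₂),
      (∀ (c : B₁) (m : Omega ℤ (prodMatrix M₁ M₂)),
        (∀ d, Commute (eOm ℤ (prodMatrix M₁ M₂) d) m) →
        pP M₁ M₂ K * (xOm ℤ (prodMatrix M₁ M₂) (Sum.inl c) *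
          ((1 - eOm ℤ (prodMatrix M₁ M₂) (Sum.inr u)) * (m * V))) = 0) →
      pP M₁ M₂ K * (xOm ℤ (prodMatrix M₁ M₂) (Sum.inr u) * (l.prod * V))
        = l.prod * (pP M₁ M₂ K * (xOm ℤ (prodMatrix M₁ M₂) (Sum.inr u) * V)) := by
  intro l
  induction l with
  | nil => intro _ V _; rw [List.prod_nil, one_mul, one_mul]
  | cons g l ih =>
    intro hl V hkill
    have hmem : ∀ g' ∈ l, ∃ c : B₁, g' = eOm ℤ (prodMatrix M₁ M₂) (Sum.inl c) ∨
        g' = 1 - eOm ℤ (prodMatrix M₁ M₂) (Sum.inl c) :=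
      fun g' h' => hl g' (List.mem_cons_of_mem _ h')
    have hlcomm : ∀ d, Commute (eOm ℤ (prodMatrix M₁ M₂) d) l.prod := by
      intro d
      refine list_prod_commute _ _ (fun g' hg' => ?_)
      obtain ⟨c', hc' | hc'⟩ := hmem g' hg' <;> rw [hc']
      · exact commute_eOm ℤ _ _ _
      · exact (Commute.one_right _).sub_right (commute_eOm ℤ _ _ _)
    have s6 := ih hmem V hkill
    have habs : ∀ W, pP M₁ M₂ K * (eOm ℤ (prodMatrix M₁ M₂) (Sum.inr u) * W)
        = pP M₁ M₂ K * W := fun W => by rw [← mul_assoc, pP_mul_e M₁ M₂ huK]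
    obtain ⟨c, hc | hc⟩ := hl g List.mem_cons_self <;> subst hc <;>
      rw [List.prod_cons] <;> have s5 := hkill c l.prod hlcomm
    · have hyg : xOm ℤ (prodMatrix M₁ M₂) (Sum.inr u) * eOm ℤ (prodMatrix M₁ M₂) (Sum.inl c)
          = eOm ℤ (prodMatrix M₁ M₂) (Sum.inl c) * xOm ℤ (prodMatrix M₁ M₂) (Sum.inr u)
            - eOm ℤ (prodMatrix M₁ M₂) (Sum.inr u) * (xOm ℤ (prodMatrix M₁ M₂) (Sum.inl c) *
              (1 - eOm ℤ (prodMatrix M₁ M₂) (Sum.inr u))) := by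
        rw [hd3b M₁ M₂ u c]; abel
      have hswap : ∀ W, pP M₁ M₂ K * (eOm ℤ (prodMatrix M₁ M₂) (Sum.inl c) * W)
          = eOm ℤ (prodMatrix M₁ M₂) (Sum.inl c) * (pP M₁ M₂ K * W) := fun W => by
        rw [← mul_assoc, ← (commute_e_pP M₁ M₂ (Sum.inl c) K).eq, mul_assoc]
      have s3 : pP M₁ M₂ K * ((eOm ℤ (prodMatrix M₁ M₂) (Sum.inl c) *
            xOm ℤ (prodMatrix M₁ M₂) (Sum.inr u)) * (l.prod * V))
          = eOm ℤ (prodMatrix M₁ M₂) (Sum.inl c) *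
            (pP M₁ M₂ K * (xOm ℤ (prodMatrix M₁ M₂) (Sum.inr u) * (l.prod * V))) := by
        simp only [mul_assoc]
        exact hswap _
      have s4 : pP M₁ M₂ K * ((eOm ℤ (prodMatrix M₁ M₂) (Sum.inr u) *
            (xOm ℤ (prodMatrix M₁ M₂) (Sum.inl c) *
              (1 - eOm ℤ (prodMatrix M₁ M₂) (Sum.inr u)))) * (l.prod * V))
          = pP M₁ M₂ K * (xOm ℤ (prodMatrix M₁ M₂) (Sum.inl c) *
              ((1 - eOm ℤ (prodMatrix M₁ M₂) (Sum.inr u)) * (l.prod * V))) := by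
        simp only [mul_assoc]
        exact habs _
      calc pP M₁ M₂ K * (xOm ℤ (prodMatrix M₁ M₂) (Sum.inr u) *
            ((eOm ℤ (prodMatrix M₁ M₂) (Sum.inl c) * l.prod) * V))
          = pP M₁ M₂ K * ((xOm ℤ (prodMatrix M₁ M₂) (Sum.inr u) *
              eOm ℤ (prodMatrix M₁ M₂) (Sum.inl c)) * (l.prod * V)) := by
            simp only [mul_assoc]
        _ = eOm ℤ (prodMatrix M₁ M₂) (Sum.inl c) *
              (pP M₁ M₂ K * (xOm ℤ (prodMatrix M₁ M₂) (Sum.inr u) * (l.prod * V)))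
            - pP M₁ M₂ K * (xOm ℤ (prodMatrix M₁ M₂) (Sum.inl c) *
              ((1 - eOm ℤ (prodMatrix M₁ M₂) (Sum.inr u)) * (l.prod * V))) := by
            rw [hyg, sub_mul, mul_sub, s3, s4]
        _ = eOm ℤ (prodMatrix M₁ M₂) (Sum.inl c) *
              (l.prod * (pP M₁ M₂ K * (xOm ℤ (prodMatrix M₁ M₂) (Sum.inr u) * V))) - 0 := by
            rw [s6, s5]
        _ = (eOm ℤ (prodMatrix M₁ M₂) (Sum.inl c) * l.prod) *
              (pP M₁ M₂ K * (xOm ℤ (prodMatrix M₁ M₂) (Sum.inr u) * V)) := by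
            rw [sub_zero]; simp only [mul_assoc]
    · have hyg : xOm ℤ (prodMatrix M₁ M₂) (Sum.inr u) *
            (1 - eOm ℤ (prodMatrix M₁ M₂) (Sum.inl c))
          = (1 - eOm ℤ (prodMatrix M₁ M₂) (Sum.inl c)) * xOm ℤ (prodMatrix M₁ M₂) (Sum.inr u)
            + eOm ℤ (prodMatrix M₁ M₂) (Sum.inr u) * (xOm ℤ (prodMatrix M₁ M₂) (Sum.inl c) *
              (1 - eOm ℤ (prodMatrix M₁ M₂) (Sum.inr u))) := by
        rw [mul_sub, sub_mul, mul_one, one_mul, hd3b M₁ M₂ u c]; abel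
      have hswap : ∀ W, pP M₁ M₂ K * ((1 - eOm ℤ (prodMatrix M₁ M₂) (Sum.inl c)) * W)
          = (1 - eOm ℤ (prodMatrix M₁ M₂) (Sum.inl c)) * (pP M₁ M₂ K * W) := fun W => by
        rw [← mul_assoc, ← (commute_oneSubE_pP M₁ M₂ (Sum.inl c) K).eq, mul_assoc]
      have s3 : pP M₁ M₂ K * (((1 - eOm ℤ (prodMatrix M₁ M₂) (Sum.inl c)) *
            xOm ℤ (prodMatrix M₁ M₂) (Sum.inr u)) * (l.prod * V))
          = (1 - eOm ℤ (prodMatrix M₁ M₂) (Sum.inl c)) *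
            (pP M₁ M₂ K * (xOm ℤ (prodMatrix M₁ M₂) (Sum.inr u) * (l.prod * V))) := by
        simp only [mul_assoc]
        exact hswap _
      have s4 : pP M₁ M₂ K * ((eOm ℤ (prodMatrix M₁ M₂) (Sum.inr u) *
            (xOm ℤ (prodMatrix M₁ M₂) (Sum.inl c) *
              (1 - eOm ℤ (prodMatrix M₁ M₂) (Sum.inr u)))) * (l.prod * V))
          = pP M₁ M₂ K * (xOm ℤ (prodMatrix M₁ M₂) (Sum.inl c) *
              ((1 - eOm ℤ (prodMatrix M₁ M₂) (Sum.inr u)) * (l.prod * V))) := by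
        simp only [mul_assoc]
        exact habs _
      calc pP M₁ M₂ K * (xOm ℤ (prodMatrix M₁ M₂) (Sum.inr u) *
            (((1 - eOm ℤ (prodMatrix M₁ M₂) (Sum.inl c)) * l.prod) * V))
          = pP M₁ M₂ K * ((xOm ℤ (prodMatrix M₁ M₂) (Sum.inr u) *
              (1 - eOm ℤ (prodMatrix M₁ M₂) (Sum.inl c))) * (l.prod * V)) := by
            simp only [mul_assoc]
        _ = (1 - eOm ℤ (prodMatrix M₁ M₂) (Sum.inl c)) *
              (pP M₁ M₂ K * (xOm ℤ (prodMatrix M₁ M₂) (Sum.inr u) * (l.prod * V)))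
            + pP M₁ M₂ K * (xOm ℤ (prodMatrix M₁ M₂) (Sum.inl c) *
              ((1 - eOm ℤ (prodMatrix M₁ M₂) (Sum.inr u)) * (l.prod * V))) := by
            rw [hyg, add_mul, mul_add, s3, s4]
        _ = (1 - eOm ℤ (prodMatrix M₁ M₂) (Sum.inl c)) *
              (l.prod * (pP M₁ M₂ K * (xOm ℤ (prodMatrix M₁ M₂) (Sum.inr u) * V))) + 0 := by
            rw [s6, s5]
        _ = ((1 - eOm ℤ (prodMatrix M₁ M₂) (Sum.inl c)) * l.prod) *
              (pP M₁ M₂ K * (xOm ℤ (prodMatrix M₁ M₂) (Sum.inr u) * V)) := by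
            rw [add_zero]; simp only [mul_assoc]

lemma moveP {I : Finset B₁} {s : B₁} (hsI : s ∈ I) :
    ∀ l : List (Omega ℤ (prodMatrix M₁ M₂)),
      (∀ g ∈ l, ∃ d : B₂, g = eOm ℤ (prodMatrix M₁ M₂) (Sum.inr d) ∨
        g = 1 - eOm ℤ (prodMatrix M₁ M₂) (Sum.inr d)) →
      ∀ V : Omega ℤ (prodMatrix M₁ M₂),
      (∀ (d : B₂) (m : Omega ℤ (prodMatrix M₁ M₂)),
        (∀ dd, Commute (eOm ℤ (prodMatrix M₁ M₂) dd) m) →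
        pA M₁ M₂ I * (xOm ℤ (prodMatrix M₁ M₂) (Sum.inr d) *
          ((1 - eOm ℤ (prodMatrix M₁ M₂) (Sum.inl s)) * (m * V))) = 0) →
      pA M₁ M₂ I * (xOm ℤ (prodMatrix M₁ M₂) (Sum.inl s) * (l.prod * V))
        = l.prod * (pA M₁ M₂ I * (xOm ℤ (prodMatrix M₁ M₂) (Sum.inl s) * V)) := by
  intro l
  induction l with
  | nil => intro _ V _; rw [List.prod_nil, one_mul, one_mul]
  | cons g l ih =>
    intro hl V hkill
    have hmem : ∀ g' ∈ l, ∃ d : B₂, g' = eOm ℤ (prodMatrix M₁ M₂) (Sum.inr d) ∨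
        g' = 1 - eOm ℤ (prodMatrix M₁ M₂) (Sum.inr d) :=
      fun g' h' => hl g' (List.mem_cons_of_mem _ h')
    have hlcomm : ∀ dd, Commute (eOm ℤ (prodMatrix M₁ M₂) dd) l.prod := by
      intro dd
      refine list_prod_commute _ _ (fun g' hg' => ?_)
      obtain ⟨c', hc' | hc'⟩ := hmem g' hg' <;> rw [hc']
      · exact commute_eOm ℤ _ _ _
      · exact (Commute.one_right _).sub_right (commute_eOm ℤ _ _ _)
    have s6 := ih hmem V hkill
    have habs : ∀ W, pA M₁ M₂ I * (eOm ℤ (prodMatrix M₁ M₂) (Sum.inl s) * W)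
        = pA M₁ M₂ I * W := fun W => by rw [← mul_assoc, pA_mul_e M₁ M₂ hsI]
    obtain ⟨d, hc | hc⟩ := hl g List.mem_cons_self <;> subst hc <;>
      rw [List.prod_cons] <;> have s5 := hkill d l.prod hlcomm
    · have hyg : xOm ℤ (prodMatrix M₁ M₂) (Sum.inl s) * eOm ℤ (prodMatrix M₁ M₂) (Sum.inr d)
          = eOm ℤ (prodMatrix M₁ M₂) (Sum.inr d) * xOm ℤ (prodMatrix M₁ M₂) (Sum.inl s)
            - eOm ℤ (prodMatrix M₁ M₂) (Sum.inl s) * (xOm ℤ (prodMatrix M₁ M₂) (Sum.inr d) *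
              (1 - eOm ℤ (prodMatrix M₁ M₂) (Sum.inl s))) := by
        rw [hd3a M₁ M₂ s d]; abel
      have hswap : ∀ W, pA M₁ M₂ I * (eOm ℤ (prodMatrix M₁ M₂) (Sum.inr d) * W)
          = eOm ℤ (prodMatrix M₁ M₂) (Sum.inr d) * (pA M₁ M₂ I * W) := fun W => by
        rw [← mul_assoc, ← (commute_e_pA M₁ M₂ (Sum.inr d) I).eq, mul_assoc]
      have s3 : pA M₁ M₂ I * ((eOm ℤ (prodMatrix M₁ M₂) (Sum.inr d) *
            xOm ℤ (prodMatrix M₁ M₂) (Sum.inl s)) * (l.prod * V))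
          = eOm ℤ (prodMatrix M₁ M₂) (Sum.inr d) *
            (pA M₁ M₂ I * (xOm ℤ (prodMatrix M₁ M₂) (Sum.inl s) * (l.prod * V))) := by
        simp only [mul_assoc]
        exact hswap _
      have s4 : pA M₁ M₂ I * ((eOm ℤ (prodMatrix M₁ M₂) (Sum.inl s) *
            (xOm ℤ (prodMatrix M₁ M₂) (Sum.inr d) *
              (1 - eOm ℤ (prodMatrix M₁ M₂) (Sum.inl s)))) * (l.prod * V))
          = pA M₁ M₂ I * (xOm ℤ (prodMatrix M₁ M₂) (Sum.inr d) *
              ((1 - eOm ℤ (prodMatrix M₁ M₂) (Sum.inl s)) * (l.prod * V))) := by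
        simp only [mul_assoc]
        exact habs _
      calc pA M₁ M₂ I * (xOm ℤ (prodMatrix M₁ M₂) (Sum.inl s) *
            ((eOm ℤ (prodMatrix M₁ M₂) (Sum.inr d) * l.prod) * V))
          = pA M₁ M₂ I * ((xOm ℤ (prodMatrix M₁ M₂) (Sum.inl s) *
              eOm ℤ (prodMatrix M₁ M₂) (Sum.inr d)) * (l.prod * V)) := by
            simp only [mul_assoc]
        _ = eOm ℤ (prodMatrix M₁ M₂) (Sum.inr d) *
              (pA M₁ M₂ I * (xOm ℤ (prodMatrix M₁ M₂) (Sum.inl s) * (l.prod * V)))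
            - pA M₁ M₂ I * (xOm ℤ (prodMatrix M₁ M₂) (Sum.inr d) *
              ((1 - eOm ℤ (prodMatrix M₁ M₂) (Sum.inl s)) * (l.prod * V))) := by
            rw [hyg, sub_mul, mul_sub, s3, s4]
        _ = eOm ℤ (prodMatrix M₁ M₂) (Sum.inr d) *
              (l.prod * (pA M₁ M₂ I * (xOm ℤ (prodMatrix M₁ M₂) (Sum.inl s) * V))) - 0 := by
            rw [s6, s5]
        _ = (eOm ℤ (prodMatrix M₁ M₂) (Sum.inr d) * l.prod) *
              (pA M₁ M₂ I * (xOm ℤ (prodMatrix M₁ M₂) (Sum.inl s) * V)) := by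
            rw [sub_zero]; simp only [mul_assoc]
    · have hyg : xOm ℤ (prodMatrix M₁ M₂) (Sum.inl s) *
            (1 - eOm ℤ (prodMatrix M₁ M₂) (Sum.inr d))
          = (1 - eOm ℤ (prodMatrix M₁ M₂) (Sum.inr d)) * xOm ℤ (prodMatrix M₁ M₂) (Sum.inl s)
            + eOm ℤ (prodMatrix M₁ M₂) (Sum.inl s) * (xOm ℤ (prodMatrix M₁ M₂) (Sum.inr d) *
              (1 - eOm ℤ (prodMatrix M₁ M₂) (Sum.inl s))) := by
        rw [mul_sub, sub_mul, mul_one, one_mul, hd3a M₁ M₂ s d]; abel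
      have hswap : ∀ W, pA M₁ M₂ I * ((1 - eOm ℤ (prodMatrix M₁ M₂) (Sum.inr d)) * W)
          = (1 - eOm ℤ (prodMatrix M₁ M₂) (Sum.inr d)) * (pA M₁ M₂ I * W) := fun W => by
        rw [← mul_assoc, ← (commute_oneSubE_pA M₁ M₂ (Sum.inr d) I).eq, mul_assoc]
      have s3 : pA M₁ M₂ I * (((1 - eOm ℤ (prodMatrix M₁ M₂) (Sum.inr d)) *
            xOm ℤ (prodMatrix M₁ M₂) (Sum.inl s)) * (l.prod * V))
          = (1 - eOm ℤ (prodMatrix M₁ M₂) (Sum.inr d)) *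
            (pA M₁ M₂ I * (xOm ℤ (prodMatrix M₁ M₂) (Sum.inl s) * (l.prod * V))) := by
        simp only [mul_assoc]
        exact hswap _
      have s4 : pA M₁ M₂ I * ((eOm ℤ (prodMatrix M₁ M₂) (Sum.inl s) *
            (xOm ℤ (prodMatrix M₁ M₂) (Sum.inr d) *
              (1 - eOm ℤ (prodMatrix M₁ M₂) (Sum.inl s)))) * (l.prod * V))
          = pA M₁ M₂ I * (xOm ℤ (prodMatrix M₁ M₂) (Sum.inr d) *
              ((1 - eOm ℤ (prodMatrix M₁ M₂) (Sum.inl s)) * (l.prod * V))) := by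
        simp only [mul_assoc]
        exact habs _
      calc pA M₁ M₂ I * (xOm ℤ (prodMatrix M₁ M₂) (Sum.inl s) *
            (((1 - eOm ℤ (prodMatrix M₁ M₂) (Sum.inr d)) * l.prod) * V))
          = pA M₁ M₂ I * ((xOm ℤ (prodMatrix M₁ M₂) (Sum.inl s) *
              (1 - eOm ℤ (prodMatrix M₁ M₂) (Sum.inr d))) * (l.prod * V)) := by
            simp only [mul_assoc]
        _ = (1 - eOm ℤ (prodMatrix M₁ M₂) (Sum.inr d)) *
              (pA M₁ M₂ I * (xOm ℤ (prodMatrix M₁ M₂) (Sum.inl s) * (l.prod * V)))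
            + pA M₁ M₂ I * (xOm ℤ (prodMatrix M₁ M₂) (Sum.inr d) *
              ((1 - eOm ℤ (prodMatrix M₁ M₂) (Sum.inl s)) * (l.prod * V))) := by
            rw [hyg, add_mul, mul_add, s3, s4]
        _ = (1 - eOm ℤ (prodMatrix M₁ M₂) (Sum.inr d)) *
              (l.prod * (pA M₁ M₂ I * (xOm ℤ (prodMatrix M₁ M₂) (Sum.inl s) * V))) + 0 := by
            rw [s6, s5]
        _ = ((1 - eOm ℤ (prodMatrix M₁ M₂) (Sum.inr d)) * l.prod) *
              (pA M₁ M₂ I * (xOm ℤ (prodMatrix M₁ M₂) (Sum.inl s) * V)) := by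
            rw [add_zero]; simp only [mul_assoc]

end Move

section CommZ
variable {B₁ B₂ : Type*} [Fintype B₁] [DecidableEq B₁] [Fintype B₂] [DecidableEq B₂]
  (M₁ : CoxeterMatrix B₁) (M₂ : CoxeterMatrix B₂)

lemma pA_list (I : Finset B₁) :
    ∃ l : List (Omega ℤ (prodMatrix M₁ M₂)), l.prod = pA M₁ M₂ I ∧
      ∀ g ∈ l, ∃ c : B₁, g = eOm ℤ (prodMatrix M₁ M₂) (Sum.inl c) ∨
        g = 1 - eOm ℤ (prodMatrix M₁ M₂) (Sum.inl c) := by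
  obtain ⟨l1, hl1, hm1⟩ := ncp_list I (fun b => eOm ℤ (prodMatrix M₁ M₂) (Sum.inl b))
    (fun a b => commute_eOm ℤ _ _ _)
  obtain ⟨l2, hl2, hm2⟩ := ncp_list Iᶜ (fun b => 1 - eOm ℤ (prodMatrix M₁ M₂) (Sum.inl b))
    (fun a b => commute_oneSubEOm ℤ _ _ _)
  refine ⟨l1 ++ l2, ?_, ?_⟩
  · rw [List.prod_append, hl1, hl2, pA]
  · intro g hg
    rcases List.mem_append.mp hg with h | h
    · obtain ⟨c, -, rfl⟩ := hm1 g h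
      exact ⟨c, Or.inl rfl⟩
    · obtain ⟨c, -, rfl⟩ := hm2 g h
      exact ⟨c, Or.inr rfl⟩

lemma pP_list (K : Finset B₂) :
    ∃ l : List (Omega ℤ (prodMatrix M₁ M₂)), l.prod = pP M₁ M₂ K ∧
      ∀ g ∈ l, ∃ d : B₂, g = eOm ℤ (prodMatrix M₁ M₂) (Sum.inr d) ∨
        g = 1 - eOm ℤ (prodMatrix M₁ M₂) (Sum.inr d) := by
  obtain ⟨l1, hl1, hm1⟩ := ncp_list K (fun b => eOm ℤ (prodMatrix M₁ M₂) (Sum.inr b))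
    (fun a b => commute_eOm ℤ _ _ _)
  obtain ⟨l2, hl2, hm2⟩ := ncp_list Kᶜ (fun b => 1 - eOm ℤ (prodMatrix M₁ M₂) (Sum.inr b))
    (fun a b => commute_oneSubEOm ℤ _ _ _)
  refine ⟨l1 ++ l2, ?_, ?_⟩
  · rw [List.prod_append, hl1, hl2, pP]
  · intro g hg
    rcases List.mem_append.mp hg with h | h
    · obtain ⟨d, -, rfl⟩ := hm1 g h
      exact ⟨d, Or.inl rfl⟩
    · obtain ⟨d, -, rfl⟩ := hm2 g h
      exact ⟨d, Or.inr rfl⟩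

/-- `e_{t}` (t in the second component) commutes with the sandwich
`ι₁(E_I) x_s ι₁(E_J)`, provided `s ∈ I \ J` and `J \ I` is nonempty. -/
lemma eZcomm {I J : Finset B₁} {s s₁ : B₁} (hsI : s ∈ I) (hsJ : s ∉ J)
    (hs₁I : s₁ ∉ I) (hs₁J : s₁ ∈ J) (d : B₂) :
    eOm ℤ (prodMatrix M₁ M₂) (Sum.inr d) *
      (pA M₁ M₂ I * (xOm ℤ (prodMatrix M₁ M₂) (Sum.inl s) * pA M₁ M₂ J))
    = (pA M₁ M₂ I * (xOm ℤ (prodMatrix M₁ M₂) (Sum.inl s) * pA M₁ M₂ J)) *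
      eOm ℤ (prodMatrix M₁ M₂) (Sum.inr d) := by
  have hzero : pA M₁ M₂ I * (xOm ℤ (prodMatrix M₁ M₂) (Sum.inr d) * pA M₁ M₂ J) = 0 := by
    have h0 := ML2 M₁ M₂ hs₁I hs₁J [xOm ℤ (prodMatrix M₁ M₂) (Sum.inr d)]
      (by
        intro g hg
        rw [List.mem_singleton] at hg
        subst hg
        exact Or.inr (hd1b M₁ M₂ d s₁))
    simpa using h0
  calc eOm ℤ (prodMatrix M₁ M₂) (Sum.inr d) *
        (pA M₁ M₂ I * (xOm ℤ (prodMatrix M₁ M₂) (Sum.inl s) * pA M₁ M₂ J))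
      = pA M₁ M₂ I * ((eOm ℤ (prodMatrix M₁ M₂) (Sum.inr d) *
          xOm ℤ (prodMatrix M₁ M₂) (Sum.inl s)) * pA M₁ M₂ J) := by
        rw [← mul_assoc, (commute_e_pA M₁ M₂ (Sum.inr d) I).eq]
        simp only [mul_assoc]
    _ = pA M₁ M₂ I * ((xOm ℤ (prodMatrix M₁ M₂) (Sum.inl s) *
            eOm ℤ (prodMatrix M₁ M₂) (Sum.inr d)) * pA M₁ M₂ J)
        + pA M₁ M₂ I * (eOm ℤ (prodMatrix M₁ M₂) (Sum.inl s) *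
            (xOm ℤ (prodMatrix M₁ M₂) (Sum.inr d) *
              ((1 - eOm ℤ (prodMatrix M₁ M₂) (Sum.inl s)) * pA M₁ M₂ J))) := by
        rw [hd3a M₁ M₂ s d, add_mul, mul_add]
        simp only [mul_assoc]
    _ = pA M₁ M₂ I * (xOm ℤ (prodMatrix M₁ M₂) (Sum.inl s) *
            (pA M₁ M₂ J * eOm ℤ (prodMatrix M₁ M₂) (Sum.inr d)))
        + pA M₁ M₂ I * (xOm ℤ (prodMatrix M₁ M₂) (Sum.inr d) * pA M₁ M₂ J) := by
        have habs : ∀ W, pA M₁ M₂ I * (eOm ℤ (prodMatrix M₁ M₂) (Sum.inl s) * W)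
            = pA M₁ M₂ I * W := fun W => by rw [← mul_assoc, pA_mul_e M₁ M₂ hsI]
        rw [oneSubE_mul_pA M₁ M₂ hsJ, habs, ← (commute_e_pA M₁ M₂ (Sum.inr d) J).eq]
        simp only [mul_assoc]
    _ = (pA M₁ M₂ I * (xOm ℤ (prodMatrix M₁ M₂) (Sum.inl s) * pA M₁ M₂ J)) *
          eOm ℤ (prodMatrix M₁ M₂) (Sum.inr d) := by
        rw [hzero, add_zero]
        simp only [mul_assoc]

/-- symmetrically: `e_c` (c in the first component) commutes with the sandwich
`ι₂(E_K) x_u ι₂(E_L)`, provided `u ∈ K \ L` and `L \ K` is nonempty. -/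
lemma eZ'comm {K L : Finset B₂} {u t₁ : B₂} (huK : u ∈ K) (huL : u ∉ L)
    (ht₁K : t₁ ∉ K) (ht₁L : t₁ ∈ L) (c : B₁) :
    eOm ℤ (prodMatrix M₁ M₂) (Sum.inl c) *
      (pP M₁ M₂ K * (xOm ℤ (prodMatrix M₁ M₂) (Sum.inr u) * pP M₁ M₂ L))
    = (pP M₁ M₂ K * (xOm ℤ (prodMatrix M₁ M₂) (Sum.inr u) * pP M₁ M₂ L)) *
      eOm ℤ (prodMatrix M₁ M₂) (Sum.inl c) := by
  have hzero : pP M₁ M₂ K * (xOm ℤ (prodMatrix M₁ M₂) (Sum.inl c) * pP M₁ M₂ L) = 0 := by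
    have h0 := ML1 M₁ M₂ ht₁K ht₁L [xOm ℤ (prodMatrix M₁ M₂) (Sum.inl c)]
      (by
        intro g hg
        rw [List.mem_singleton] at hg
        subst hg
        exact Or.inr (hd1a M₁ M₂ c t₁))
    simpa using h0
  calc eOm ℤ (prodMatrix M₁ M₂) (Sum.inl c) *
        (pP M₁ M₂ K * (xOm ℤ (prodMatrix M₁ M₂) (Sum.inr u) * pP M₁ M₂ L))
      = pP M₁ M₂ K * ((eOm ℤ (prodMatrix M₁ M₂) (Sum.inl c) *
          xOm ℤ (prodMatrix M₁ M₂) (Sum.inr u)) * pP M₁ M₂ L) := by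
        rw [← mul_assoc, (commute_e_pP M₁ M₂ (Sum.inl c) K).eq]
        simp only [mul_assoc]
    _ = pP M₁ M₂ K * ((xOm ℤ (prodMatrix M₁ M₂) (Sum.inr u) *
            eOm ℤ (prodMatrix M₁ M₂) (Sum.inl c)) * pP M₁ M₂ L)
        + pP M₁ M₂ K * (eOm ℤ (prodMatrix M₁ M₂) (Sum.inr u) *
            (xOm ℤ (prodMatrix M₁ M₂) (Sum.inl c) *
              ((1 - eOm ℤ (prodMatrix M₁ M₂) (Sum.inr u)) * pP M₁ M₂ L))) := by
        rw [hd3b M₁ M₂ u c, add_mul, mul_add]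
        simp only [mul_assoc]
    _ = pP M₁ M₂ K * (xOm ℤ (prodMatrix M₁ M₂) (Sum.inr u) *
            (pP M₁ M₂ L * eOm ℤ (prodMatrix M₁ M₂) (Sum.inl c)))
        + pP M₁ M₂ K * (xOm ℤ (prodMatrix M₁ M₂) (Sum.inl c) * pP M₁ M₂ L) := by
        have habs : ∀ W, pP M₁ M₂ K * (eOm ℤ (prodMatrix M₁ M₂) (Sum.inr u) * W)
            = pP M₁ M₂ K * W := fun W => by rw [← mul_assoc, pP_mul_e M₁ M₂ huK]
        rw [oneSubE_mul_pP M₁ M₂ huL, habs, ← (commute_e_pP M₁ M₂ (Sum.inl c) L).eq]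
        simp only [mul_assoc]
    _ = (pP M₁ M₂ K * (xOm ℤ (prodMatrix M₁ M₂) (Sum.inr u) * pP M₁ M₂ L)) *
          eOm ℤ (prodMatrix M₁ M₂) (Sum.inl c) := by
        rw [hzero, add_zero]
        simp only [mul_assoc]

/-- `ι₁(E_I) x_s ι₁(E_J)` commutes with `ι₂(E_N)` for any `N`. -/
lemma Zppcomm {I J : Finset B₁} {s s₁ : B₁} (hsI : s ∈ I) (hsJ : s ∉ J)
    (hs₁I : s₁ ∉ I) (hs₁J : s₁ ∈ J) (N : Finset B₂) :
    Commute (pA M₁ M₂ I * (xOm ℤ (prodMatrix M₁ M₂) (Sum.inl s) * pA M₁ M₂ J))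
      (pP M₁ M₂ N) := by
  rw [pP]
  refine Commute.mul_right ?_ ?_
  · exact Finset.noncommProd_commute _ _ _ _
      (fun x _ => (eZcomm M₁ M₂ hsI hsJ hs₁I hs₁J x).symm)
  · exact Finset.noncommProd_commute _ _ _ _
      (fun x _ => (Commute.one_right _).sub_right
        ((eZcomm M₁ M₂ hsI hsJ hs₁I hs₁J x).symm))

/-- `ι₂(E_K) x_u ι₂(E_L)` commutes with `ι₁(E_N)` for any `N`. -/
lemma Z'ppcomm {K L : Finset B₂} {u t₁ : B₂} (huK : u ∈ K) (huL : u ∉ L)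
    (ht₁K : t₁ ∉ K) (ht₁L : t₁ ∈ L) (N : Finset B₁) :
    Commute (pP M₁ M₂ K * (xOm ℤ (prodMatrix M₁ M₂) (Sum.inr u) * pP M₁ M₂ L))
      (pA M₁ M₂ N) := by
  rw [pA]
  refine Commute.mul_right ?_ ?_
  · exact Finset.noncommProd_commute _ _ _ _
      (fun x _ => (eZ'comm M₁ M₂ huK huL ht₁K ht₁L x).symm)
  · exact Finset.noncommProd_commute _ _ _ _
      (fun x _ => (Commute.one_right _).sub_right
        ((eZ'comm M₁ M₂ huK huL ht₁K ht₁L x).symm))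

end CommZ

section CoreThm
variable {B₁ B₂ : Type*} [Fintype B₁] [DecidableEq B₁] [Fintype B₂] [DecidableEq B₂]
  (M₁ : CoxeterMatrix B₁) (M₂ : CoxeterMatrix B₂)

theorem statement12_core {I J : Finset B₁} {s s₁ : B₁} (hsI : s ∈ I) (hsJ : s ∉ J)
    (hs₁I : s₁ ∉ I) (hs₁J : s₁ ∈ J)
    {K L : Finset B₂} {u t₁ : B₂} (huK : u ∈ K) (huL : u ∉ L) (ht₁K : t₁ ∉ K) (ht₁L : t₁ ∈ L) :
    (pA M₁ M₂ I * pP M₁ M₂ K * xOm ℤ (prodMatrix M₁ M₂) (Sum.inl s) *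
        (pA M₁ M₂ J * pP M₁ M₂ K)) *
      (pA M₁ M₂ J * pP M₁ M₂ K * xOm ℤ (prodMatrix M₁ M₂) (Sum.inr u) *
        (pA M₁ M₂ J * pP M₁ M₂ L)) =
      (pA M₁ M₂ I * pP M₁ M₂ K * xOm ℤ (prodMatrix M₁ M₂) (Sum.inr u) *
        (pA M₁ M₂ I * pP M₁ M₂ L)) *
      (pA M₁ M₂ I * pP M₁ M₂ L * xOm ℤ (prodMatrix M₁ M₂) (Sum.inl s) *
        (pA M₁ M₂ J * pP M₁ M₂ L)) ∧
    (pA M₁ M₂ I * xOm ℤ (prodMatrix M₁ M₂) (Sum.inl s) * pA M₁ M₂ J) *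
      (pP M₁ M₂ K * xOm ℤ (prodMatrix M₁ M₂) (Sum.inr u) * pP M₁ M₂ L) =
      (pA M₁ M₂ I * pP M₁ M₂ K * xOm ℤ (prodMatrix M₁ M₂) (Sum.inl s) *
        (pA M₁ M₂ J * pP M₁ M₂ K)) *
      (pA M₁ M₂ J * pP M₁ M₂ K * xOm ℤ (prodMatrix M₁ M₂) (Sum.inr u) *
        (pA M₁ M₂ J * pP M₁ M₂ L)) ∧
    (pP M₁ M₂ K * xOm ℤ (prodMatrix M₁ M₂) (Sum.inr u) * pP M₁ M₂ L) *
      (pA M₁ M₂ I * xOm ℤ (prodMatrix M₁ M₂) (Sum.inl s) * pA M₁ M₂ J) =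
      (pA M₁ M₂ I * pP M₁ M₂ K * xOm ℤ (prodMatrix M₁ M₂) (Sum.inr u) *
        (pA M₁ M₂ I * pP M₁ M₂ L)) *
      (pA M₁ M₂ I * pP M₁ M₂ L * xOm ℤ (prodMatrix M₁ M₂) (Sum.inl s) *
        (pA M₁ M₂ J * pP M₁ M₂ L)) ∧
    (pA M₁ M₂ I * xOm ℤ (prodMatrix M₁ M₂) (Sum.inl s) * pA M₁ M₂ J) *
      (pP M₁ M₂ K * xOm ℤ (prodMatrix M₁ M₂) (Sum.inr u) * pP M₁ M₂ L) =
      (pP M₁ M₂ K * xOm ℤ (prodMatrix M₁ M₂) (Sum.inr u) * pP M₁ M₂ L) *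
      (pA M₁ M₂ I * xOm ℤ (prodMatrix M₁ M₂) (Sum.inl s) * pA M₁ M₂ J) := by
  set A := pA M₁ M₂ I with hAdef
  set Bb := pA M₁ M₂ J with hBdef
  set P := pP M₁ M₂ K with hPdef
  set Q := pP M₁ M₂ L with hQdef
  set X := xOm ℤ (prodMatrix M₁ M₂) (Sum.inl s) with hXdef
  set Y := xOm ℤ (prodMatrix M₁ M₂) (Sum.inr u) with hYdef
  have hAA : A * A = A := pA_idem M₁ M₂ I
  have hBB : Bb * Bb = Bb := pA_idem M₁ M₂ J
  have hPP : P * P = P := pP_idem M₁ M₂ K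
  have hQQ : Q * Q = Q := pP_idem M₁ M₂ L
  have hAP : Commute A P := commute_pA_pP M₁ M₂ I K
  have hAQ : Commute A Q := commute_pA_pP M₁ M₂ I L
  have hBP : Commute Bb P := commute_pA_pP M₁ M₂ J K
  have hZP : Commute (A * (X * Bb)) P := Zppcomm M₁ M₂ hsI hsJ hs₁I hs₁J K
  have hZQ : Commute (A * (X * Bb)) Q := Zppcomm M₁ M₂ hsI hsJ hs₁I hs₁J L
  have hxy : X * Y = Y * X := cross_rel_x _ (Sum.inl s) (Sum.inr u) rfl
  obtain ⟨lA, hlA, hlAcond⟩ := pA_list M₁ M₂ I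
  obtain ⟨lB, hlB, hlBcond⟩ := pA_list M₁ M₂ J
  obtain ⟨lP, hlP, hlPcond⟩ := pP_list M₁ M₂ K
  -- kill hypotheses for the move lemmas
  have hkQ : ∀ (c : B₁) (m : Omega ℤ (prodMatrix M₁ M₂)),
      (∀ d, Commute (eOm ℤ (prodMatrix M₁ M₂) d) m) →
      P * (xOm ℤ (prodMatrix M₁ M₂) (Sum.inl c) *
        ((1 - eOm ℤ (prodMatrix M₁ M₂) (Sum.inr u)) * (m * Q))) = 0 := by
    intro c m hm
    have h0 := ML1 M₁ M₂ ht₁K ht₁L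
      [xOm ℤ (prodMatrix M₁ M₂) (Sum.inl c), 1 - eOm ℤ (prodMatrix M₁ M₂) (Sum.inr u), m]
      (by
        intro g hg
        simp only [List.mem_cons, List.mem_singleton, List.not_mem_nil, or_false] at hg
        rcases hg with rfl | rfl | rfl
        · exact Or.inr (hd1a M₁ M₂ c t₁)
        · exact Or.inl ((Commute.one_right _).sub_right (commute_eOm ℤ _ _ _)).eq
        · exact Or.inl (hm (Sum.inr t₁)).eq)
    simp only [List.prod_cons, List.prod_nil, mul_one, mul_assoc] at h0
    exact h0
  have hkXBQ : ∀ (c : B₁) (m : Omega ℤ (prodMatrix M₁ M₂)),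
      (∀ d, Commute (eOm ℤ (prodMatrix M₁ M₂) d) m) →
      P * (xOm ℤ (prodMatrix M₁ M₂) (Sum.inl c) *
        ((1 - eOm ℤ (prodMatrix M₁ M₂) (Sum.inr u)) * (m * (X * (Bb * Q))))) = 0 := by
    intro c m hm
    have h0 := ML1 M₁ M₂ ht₁K ht₁L
      [xOm ℤ (prodMatrix M₁ M₂) (Sum.inl c), 1 - eOm ℤ (prodMatrix M₁ M₂) (Sum.inr u), m, X, Bb]
      (by
        intro g hg
        simp only [List.mem_cons, List.mem_singleton, List.not_mem_nil, or_false] at hg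
        rcases hg with rfl | rfl | rfl | rfl | rfl
        · exact Or.inr (hd1a M₁ M₂ c t₁)
        · exact Or.inl ((Commute.one_right _).sub_right (commute_eOm ℤ _ _ _)).eq
        · exact Or.inl (hm (Sum.inr t₁)).eq
        · exact Or.inr (hd1a M₁ M₂ s t₁)
        · exact Or.inl (commute_e_pA M₁ M₂ (Sum.inr t₁) J).eq)
    simp only [List.prod_cons, List.prod_nil, mul_one, mul_assoc] at h0
    exact h0
  have hk2YBQ : ∀ (d : B₂) (m : Omega ℤ (prodMatrix M₁ M₂)),
      (∀ dd, Commute (eOm ℤ (prodMatrix M₁ M₂) dd) m) →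
      A * (xOm ℤ (prodMatrix M₁ M₂) (Sum.inr d) *
        ((1 - eOm ℤ (prodMatrix M₁ M₂) (Sum.inl s)) * (m * (Y * (Bb * Q))))) = 0 := by
    intro d m hm
    have h0 := ML2 M₁ M₂ hs₁I hs₁J
      [xOm ℤ (prodMatrix M₁ M₂) (Sum.inr d), 1 - eOm ℤ (prodMatrix M₁ M₂) (Sum.inl s), m, Y]
      (by
        intro g hg
        simp only [List.mem_cons, List.mem_singleton, List.not_mem_nil, or_false] at hg
        rcases hg with rfl | rfl | rfl | rfl
        · exact Or.inr (hd1b M₁ M₂ d s₁)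
        · exact Or.inl ((Commute.one_right _).sub_right (commute_eOm ℤ _ _ _)).eq
        · exact Or.inl (hm (Sum.inl s₁)).eq
        · exact Or.inr (hd1b M₁ M₂ u s₁))
    have h1 := congrArg (fun z => z * Q) h0
    simp only [List.prod_cons, List.prod_nil, mul_one, zero_mul, mul_assoc] at h1
    exact h1
  -- moving products of idempotents through the sandwiches
  have hBmove : P * (Y * (Bb * Q)) = Bb * (P * (Y * Q)) := by
    have h := moveB M₁ M₂ huK lB hlBcond Q hkQ
    rw [hlB] at h
    exact h
  have hAmoveQ : P * (Y * (A * Q)) = A * (P * (Y * Q)) := by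
    have h := moveB M₁ M₂ huK lA hlAcond Q hkQ
    rw [hlA] at h
    exact h
  have hAmoveXBQ : P * (Y * (A * (X * (Bb * Q)))) = A * (P * (Y * (X * (Bb * Q)))) := by
    have h := moveB M₁ M₂ huK lA hlAcond (X * (Bb * Q)) hkXBQ
    rw [hlA] at h
    exact h
  have hPmove : A * (X * (P * (Y * (Bb * Q)))) = P * (A * (X * (Y * (Bb * Q)))) := by
    have h := moveP M₁ M₂ hsI lP hlPcond (Y * (Bb * Q)) hk2YBQ
    rw [hlP] at h
    exact h
  -- the normal form
  have hE1 : (A * (X * Bb)) * (P * (Y * Q)) = P * (A * (X * (Y * (Bb * Q)))) := by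
    calc (A * (X * Bb)) * (P * (Y * Q))
        = A * (X * (Bb * (P * (Y * Q)))) := by simp only [mul_assoc]
      _ = A * (X * (P * (Y * (Bb * Q)))) := by rw [← hBmove]
      _ = P * (A * (X * (Y * (Bb * Q)))) := hPmove
  have hE2 : (P * (Y * Q)) * (A * (X * Bb)) = P * (A * (X * (Y * (Bb * Q)))) := by
    calc (P * (Y * Q)) * (A * (X * Bb))
        = P * (Y * (Q * (A * (X * Bb)))) := by simp only [mul_assoc]
      _ = P * (Y * (Q * (A * (X * Bb)) * 1)) := by rw [mul_one]
      _ = P * (Y * ((A * (X * Bb)) * Q * 1)) := by rw [← hZQ.eq]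
      _ = P * (Y * (A * (X * (Bb * Q)))) := by rw [mul_one]; simp only [mul_assoc]
      _ = A * (P * (Y * (X * (Bb * Q)))) := hAmoveXBQ
      _ = A * (P * ((Y * X) * (Bb * Q))) := by simp only [mul_assoc]
      _ = A * (P * ((X * Y) * (Bb * Q))) := by rw [hxy]
      _ = (A * P) * (X * (Y * (Bb * Q))) := by simp only [mul_assoc]
      _ = (P * A) * (X * (Y * (Bb * Q))) := by rw [hAP.eq]
      _ = P * (A * (X * (Y * (Bb * Q)))) := by simp only [mul_assoc]
  have hE3 : (A * P * X * (Bb * P)) * (Bb * P * Y * (Bb * Q))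
      = (A * (X * Bb)) * (P * (Y * Q)) := by
    have F1 : A * P * X * (Bb * P) = (A * (X * Bb)) * P := by
      calc A * P * X * (Bb * P) = P * A * X * (Bb * P) := by rw [hAP.eq]
        _ = P * ((A * (X * Bb)) * P) := by simp only [mul_assoc]
        _ = P * (P * (A * (X * Bb))) := by rw [hZP.eq]
        _ = (P * P) * (A * (X * Bb)) := by simp only [mul_assoc]
        _ = P * (A * (X * Bb)) := by rw [hPP]
        _ = (A * (X * Bb)) * P := by rw [← hZP.eq]
    have F2 : Bb * P * Y * (Bb * Q) = Bb * (P * (Y * Q)) := by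
      calc Bb * P * Y * (Bb * Q) = Bb * (P * (Y * (Bb * Q))) := by simp only [mul_assoc]
        _ = Bb * (Bb * (P * (Y * Q))) := by rw [hBmove]
        _ = (Bb * Bb) * (P * (Y * Q)) := by simp only [mul_assoc]
        _ = Bb * (P * (Y * Q)) := by rw [hBB]
    rw [F1, F2]
    calc ((A * (X * Bb)) * P) * (Bb * (P * (Y * Q)))
        = (A * (X * Bb)) * ((P * Bb) * (P * (Y * Q))) := by simp only [mul_assoc]
      _ = (A * (X * Bb)) * ((Bb * P) * (P * (Y * Q))) := by rw [← hBP.eq]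
      _ = (A * (X * Bb)) * (Bb * ((P * P) * (Y * Q))) := by simp only [mul_assoc]
      _ = (A * (X * Bb)) * (Bb * (P * (Y * Q))) := by rw [hPP]
      _ = A * (X * ((Bb * Bb) * (P * (Y * Q)))) := by simp only [mul_assoc]
      _ = A * (X * (Bb * (P * (Y * Q)))) := by rw [hBB]
      _ = (A * (X * Bb)) * (P * (Y * Q)) := by simp only [mul_assoc]
  have hE4 : (A * P * Y * (A * Q)) * (A * Q * X * (Bb * Q))
      = P * (A * (X * (Y * (Bb * Q)))) := by
    have F3 : A * P * Y * (A * Q) = A * (P * (Y * Q)) := by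
      calc A * P * Y * (A * Q) = A * (P * (Y * (A * Q))) := by simp only [mul_assoc]
        _ = A * (A * (P * (Y * Q))) := by rw [hAmoveQ]
        _ = (A * A) * (P * (Y * Q)) := by simp only [mul_assoc]
        _ = A * (P * (Y * Q)) := by rw [hAA]
    have F4 : A * Q * X * (Bb * Q) = (A * (X * Bb)) * Q := by
      calc A * Q * X * (Bb * Q) = Q * A * X * (Bb * Q) := by rw [hAQ.eq]
        _ = Q * ((A * (X * Bb)) * Q) := by simp only [mul_assoc]
        _ = Q * (Q * (A * (X * Bb))) := by rw [hZQ.eq]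
        _ = (Q * Q) * (A * (X * Bb)) := by simp only [mul_assoc]
        _ = Q * (A * (X * Bb)) := by rw [hQQ]
        _ = (A * (X * Bb)) * Q := by rw [← hZQ.eq]
    rw [F3, F4]
    calc (A * (P * (Y * Q))) * ((A * (X * Bb)) * Q)
        = A * (((P * (Y * Q)) * (A * (X * Bb))) * Q) := by simp only [mul_assoc]
      _ = A * ((P * (A * (X * (Y * (Bb * Q))))) * Q) := by rw [hE2]
      _ = A * (P * (A * (X * (Y * (Bb * (Q * Q)))))) := by simp only [mul_assoc]
      _ = A * (P * (A * (X * (Y * (Bb * Q))))) := by rw [hQQ]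
      _ = (A * P) * (A * (X * (Y * (Bb * Q)))) := by simp only [mul_assoc]
      _ = (P * A) * (A * (X * (Y * (Bb * Q)))) := by rw [hAP.eq]
      _ = P * ((A * A) * (X * (Y * (Bb * Q)))) := by simp only [mul_assoc]
      _ = P * (A * (X * (Y * (Bb * Q)))) := by rw [hAA]
  refine ⟨?_, ?_, ?_, ?_⟩
  · rw [hE3, hE4]
    exact hE1
  · rw [hE3]
    simp only [mul_assoc]
  · rw [hE4]
    calc (P * Y * Q) * (A * X * Bb) = (P * (Y * Q)) * (A * (X * Bb)) := by
          simp only [mul_assoc]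
      _ = P * (A * (X * (Y * (Bb * Q)))) := hE2
  · calc (A * X * Bb) * (P * Y * Q) = (A * (X * Bb)) * (P * (Y * Q)) := by
          simp only [mul_assoc]
      _ = P * (A * (X * (Y * (Bb * Q)))) := hE1
      _ = (P * (Y * Q)) * (A * (X * Bb)) := hE2.symm
      _ = (P * Y * Q) * (A * X * Bb) := by simp only [mul_assoc]

end CoreThm

end Statement12Aux
/-- for transversal edges `I ⇆ J` in `Q_{W₁}` and `K ⇆ L` in `Q_{W₂}`,
`X_{I⊔K, J⊔K} X_{J⊔K, J⊔L} = X_{I⊔K, I⊔L} X_{I⊔L, J⊔L}` holds in `Ω(W,S)`; the left side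
is `ι₁(X_{IJ}) ι₂(X_{KL})` and the right side is `ι₂(X_{KL}) ι₁(X_{IJ})`, so
`[ι₁(X_{IJ}), ι₂(X_{KL})] = 0`. -/
theorem statement12 {B₁ B₂ : Type*} [Fintype B₁] [DecidableEq B₁] [Fintype B₂]
    [DecidableEq B₂] (M₁ : CoxeterMatrix B₁) (M₂ : CoxeterMatrix B₂)
    {W₁ W₂ : Type*} [Group W₁] [Group W₂] [Finite W₁] [Finite W₂]
    (cs₁ : CoxeterSystem M₁ W₁) (cs₂ : CoxeterSystem M₂ W₂)
    (cs : CoxeterSystem (prodMatrix M₁ M₂) (W₁ × W₂))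
    (f₁ : Omega ℤ M₁ →+* Omega ℤ (prodMatrix M₁ M₂))
    (f₂ : Omega ℤ M₂ →+* Omega ℤ (prodMatrix M₁ M₂))
    (h₁ : Parab1Cond ℤ M₁ M₂ ⇑f₁) (h₂ : Parab2Cond ℤ M₁ M₂ ⇑f₂)
    (I J : Finset B₁) (hIJ : Transversal M₁ I J) (s : B₁) (hs : s ∈ I \ J)
    (K L : Finset B₂) (hKL : Transversal M₂ K L) (u : B₂) (hu : u ∈ K \ L) :
    XOm ℤ (prodMatrix M₁ M₂) (fjoin I K) (fjoin J K) (Sum.inl s) *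
        XOm ℤ (prodMatrix M₁ M₂) (fjoin J K) (fjoin J L) (Sum.inr u) =
      XOm ℤ (prodMatrix M₁ M₂) (fjoin I K) (fjoin I L) (Sum.inr u) *
        XOm ℤ (prodMatrix M₁ M₂) (fjoin I L) (fjoin J L) (Sum.inl s) ∧
    f₁ (XOm ℤ M₁ I J s) * f₂ (XOm ℤ M₂ K L u) =
      XOm ℤ (prodMatrix M₁ M₂) (fjoin I K) (fjoin J K) (Sum.inl s) *
        XOm ℤ (prodMatrix M₁ M₂) (fjoin J K) (fjoin J L) (Sum.inr u) ∧
    f₂ (XOm ℤ M₂ K L u) * f₁ (XOm ℤ M₁ I J s) =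
      XOm ℤ (prodMatrix M₁ M₂) (fjoin I K) (fjoin I L) (Sum.inr u) *
        XOm ℤ (prodMatrix M₁ M₂) (fjoin I L) (fjoin J L) (Sum.inl s) ∧
    Commute (f₁ (XOm ℤ M₁ I J s)) (f₂ (XOm ℤ M₂ K L u)) := by
  obtain ⟨s₁, hs₁⟩ := hIJ.2
  obtain ⟨t₁, ht₁⟩ := hKL.2
  rw [Finset.mem_sdiff] at hs hu hs₁ ht₁
  have core := statement12_core M₁ M₂ hs.1 hs.2 hs₁.2 hs₁.1 hu.1 hu.2 ht₁.2 ht₁.1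
  simp only [XOm, map_mul, EOm_fjoin M₁ M₂, f1_EOm M₁ M₂ f₁ h₁, f2_EOm M₁ M₂ f₂ h₂,
    (h₁ s).2, (h₂ u).2]
  exact core

end WGraphPaper

end
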